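/- arXiv:1802.04447 — 6 statements merged into one kernel-verified Lean document; each statement's English description precedes it below -/
import Mathlib

section
/- Let W ∈ ℝ^{N×N} be a symmetric matrix with nonnegative entries and positive degrees, with normalized Laplacian L, and let W_c = P W Pᵀ be its coarse graph with respect to a partition of {1,…,N} into n nonempty parts, with normalized Laplacian L_c. If λ(1) ≤ … ≤ λ(N) are the eigenvalues of L and λ_c(1) ≤ … ≤ λ_c(n) are the eigenvalues of L_c, then for every i with 1 ≤ i ≤ n it holds that λ(i) ≤ λ_c(i) ≤ λ(i + N − n). -/
open Matrix BigOperators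

noncomputable section

/-- Degree of node `i`: the `i`-th row sum of the weight matrix. -/
def deg {N : ℕ} (W : Matrix (Fin N) (Fin N) ℝ) (i : Fin N) : ℝ := ∑ j, W i j

/-- `D^{-1/2}`: the diagonal matrix of inverse square roots of degrees. -/
def invSqrtDeg {N : ℕ} (W : Matrix (Fin N) (Fin N) ℝ) : Matrix (Fin N) (Fin N) ℝ :=
  Matrix.diagonal fun i => (Real.sqrt (deg W i))⁻¹

/-- Normalized Laplacian `L = I - D^{-1/2} W D^{-1/2}`. -/
def normLap {N : ℕ} (W : Matrix (Fin N) (Fin N) ℝ) : Matrix (Fin N) (Fin N) ℝ :=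
  1 - invSqrtDeg W * W * invSqrtDeg W

/-- Random-walk transition matrix `D^{-1} W`. -/
def rwMat {N : ℕ} (W : Matrix (Fin N) (Fin N) ℝ) : Matrix (Fin N) (Fin N) ℝ :=
  Matrix.diagonal (fun i => (deg W i)⁻¹) * W

/-- The 0/1 partition matrix `P` of the partition encoded by `f` (node `i` lies in part `f i`). -/
def partMat {N n : ℕ} (f : Fin N → Fin n) : Matrix (Fin n) (Fin N) ℝ :=
  fun p i => if f i = p then 1 else 0

/-- Size `|S_p|` of the part `p`. -/
def partSize {N n : ℕ} (f : Fin N → Fin n) (p : Fin n) : ℕ :=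
  (Finset.univ.filter fun i => f i = p).card

/-- Coarse adjacency matrix `W_c = P W Pᵀ`. -/
def coarse {N n : ℕ} (f : Fin N → Fin n) (W : Matrix (Fin N) (Fin N) ℝ) :
    Matrix (Fin n) (Fin n) ℝ :=
  partMat f * W * (partMat f)ᵀ

/-- Lifted adjacency matrix `W_l(i,j) = W_c(f i, f j) / (|S_{f i}|·|S_{f j}|)`. -/
def liftG {N n : ℕ} (f : Fin N → Fin n) (W : Matrix (Fin N) (Fin N) ℝ) :
    Matrix (Fin N) (Fin N) ℝ :=
  fun i j => coarse f W (f i) (f j) / ((partSize f (f i) : ℝ) * (partSize f (f j) : ℝ))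

/-- Normalized coarsening matrix `C` with `C(p,i) = 1/√|S_p|` iff `i ∈ S_p`. -/
def coarsenMat {N n : ℕ} (f : Fin N → Fin n) : Matrix (Fin n) (Fin N) ℝ :=
  fun p i => if f i = p then (Real.sqrt (partSize f p : ℝ))⁻¹ else 0

/-- Pseudo-inverse `P⁺` of the partition matrix, `P⁺(i,p) = 1/|S_p|` iff `i ∈ S_p`. -/
def pinvMat {N n : ℕ} (f : Fin N → Fin n) : Matrix (Fin N) (Fin n) ℝ :=
  fun i p => if f i = p then ((partSize f p : ℝ))⁻¹ else 0

/-- `μ` lists the eigenvalues of `A` in nondecreasing order (with multiplicity):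
`μ` is monotone and the characteristic polynomial of `A` splits as `∏ (X - μ i)`. -/
def sortedEigs {m : ℕ} (A : Matrix (Fin m) (Fin m) ℝ) (μ : Fin m → ℝ) : Prop :=
  Monotone μ ∧ A.charpoly = ∏ i, (Polynomial.X - Polynomial.C (μ i))

/-- Squared Frobenius norm of a matrix. -/
def frobSq {a b : ℕ} (M : Matrix (Fin a) (Fin b) ℝ) : ℝ := ∑ i, ∑ j, (M i j) ^ 2

/-- Partial spectral distance between sorted spectra `μ` (original, size `N`) and
`μc` (coarse, size `n`): `∑_{i=1}^k |μ(i) - μc(i)| + ∑_{i=k+1}^n |μc(i) - μ(i+N-n)|`,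
where `k` is the largest index with `μc k < 1` (for monotone `μc`). -/
def SDpart {N n : ℕ} (h : n ≤ N) (μ : Fin N → ℝ) (μc : Fin n → ℝ) : ℝ :=
  ∑ i : Fin n,
    if μc i < 1 then |μ (Fin.castLE h i) - μc i|
    else |μc i - μ ⟨i.1 + N - n, by have := i.2; omega⟩|



lemma exists_ker {t s : ℕ} (h : t < s) (K : Matrix (Fin t) (Fin s) ℝ) :
    ∃ z : Fin s → ℝ, z ≠ 0 ∧ K *ᵥ z = 0 := by
  have hinj : ¬ Function.Injective K.mulVecLin := by
    intro hi
    have := LinearMap.finrank_le_finrank_of_injective hi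
    simp [Module.finrank_pi] at this
    omega
  rw [Function.not_injective_iff] at hinj
  obtain ⟨a, b, hab, hne⟩ := hinj
  exact ⟨a - b, sub_ne_zero_of_ne hne, by simpa [mulVec_sub, sub_eq_zero] using hab⟩

lemma sum_fin_lt {n : ℕ} {m : ℕ} (h : m ≤ n) (g : Fin n → ℝ)
    (hg : ∀ p : Fin n, m ≤ p.1 → g p = 0) :
    ∑ p, g p = ∑ k : Fin m, g (Fin.castLE h k) := by
  set g' : ℕ → ℝ := fun r => if hr : r < n then g ⟨r, hr⟩ else 0 with hg'
  have h1 : ∑ p : Fin n, g p = ∑ r ∈ Finset.range n, g' r := by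
    rw [← Fin.sum_univ_eq_sum_range]
    exact Finset.sum_congr rfl fun p _ => by simp [hg', p.2]
  have h2 : ∑ k : Fin m, g (Fin.castLE h k) = ∑ r ∈ Finset.range m, g' r := by
    rw [← Fin.sum_univ_eq_sum_range]
    refine Finset.sum_congr rfl fun k _ => ?_
    have hk : (k : ℕ) < n := lt_of_lt_of_le k.2 h
    simp only [hg', dif_pos hk]
    rfl
  rw [h1, h2]
  refine (Finset.sum_subset (Finset.range_subset_range.2 h) fun r hr hr' => ?_).symm
  simp only [Finset.mem_range] at hr hr'
  simp only [hg', dif_pos hr]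
  exact hg ⟨r, hr⟩ (le_of_not_gt hr')

lemma sum_fin_ge {n : ℕ} {m : ℕ} (h : m ≤ n) (g : Fin n → ℝ)
    (hg : ∀ p : Fin n, p.1 < m → g p = 0) :
    ∑ p, g p = ∑ k : Fin (n - m), g ⟨k.1 + m, by omega⟩ := by
  have key := sum_fin_lt (n := n) (m := n - m) (by omega) (fun p => g (Fin.rev p))
    (fun p hp => hg (Fin.rev p) (by rw [Fin.val_rev]; omega))
  have l1 : ∑ p, g (Fin.rev p) = ∑ p, g p :=
    Fintype.sum_bijective Fin.rev Fin.rev_bijective _ _ (fun _ => rfl)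
  rw [l1] at key
  rw [key]
  refine Fintype.sum_bijective Fin.rev Fin.rev_bijective _ _ (fun k => congrArg g (Fin.val_injective ?_))
  simp only [Fin.val_rev, Fin.coe_castLE]
  omega

section core
variable {N n : ℕ}

lemma quad_transfer (M : Matrix (Fin N) (Fin n) ℝ) (A : Matrix (Fin N) (Fin N) ℝ)
    (y : Fin n → ℝ) :
    (M *ᵥ y) ⬝ᵥ (A *ᵥ (M *ᵥ y)) = y ⬝ᵥ ((Mᵀ * A * M) *ᵥ y) := by
  rw [← mulVec_mulVec, ← mulVec_mulVec, dotProduct_mulVec y, vecMul_transpose]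

lemma dot_diag (d v : Fin N → ℝ) :
    v ⬝ᵥ (Matrix.diagonal d *ᵥ v) = ∑ j, d j * v j ^ 2 := by
  simp only [dotProduct, mulVec_diagonal]
  exact Finset.sum_congr rfl fun j _ => by ring

lemma core_lower (hnN : n ≤ N) (μ : Fin N → ℝ) (μc : Fin n → ℝ)
    (hμ : Monotone μ) (hμc : Monotone μc)
    (M : Matrix (Fin N) (Fin n) ℝ) (hM1 : Mᵀ * M = 1)
    (hM2 : Mᵀ * Matrix.diagonal μ * M = Matrix.diagonal μc) (i : Fin n) :
    μ (Fin.castLE hnN i) ≤ μc i := by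
  have hi1n : i.1 + 1 ≤ n := i.2
  -- kernel vector
  obtain ⟨z, hz, hKz⟩ := exists_ker (Nat.lt_succ_self i.1)
    (fun (j : Fin i.1) (k : Fin (i.1 + 1)) =>
      M (Fin.castLE (by omega) j) (Fin.castLE hi1n k))
  set y : Fin n → ℝ := fun p => if hp : p.1 < i.1 + 1 then z ⟨p.1, hp⟩ else 0 with hy
  set x : Fin N → ℝ := M *ᵥ y with hx
  have hy0 : ∀ p : Fin n, i.1 + 1 ≤ p.1 → y p = 0 := fun p hp => by
    simp only [hy]; exact dif_neg (by omega)
  -- x vanishes below i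
  have hx0 : ∀ j : Fin N, j.1 < i.1 → x j = 0 := by
    intro j hj
    have : x j = ∑ p, M j p * y p := rfl
    rw [this, sum_fin_lt hi1n _ (fun p hp => by rw [hy0 p hp, mul_zero])]
    have := congrFun hKz ⟨j.1, hj⟩
    simp only [mulVec, dotProduct, Pi.zero_apply] at this
    rw [← this]
    refine Finset.sum_congr rfl fun k _ => ?_
    have : y (Fin.castLE hi1n k) = z k := by
      show (if hp : k.1 < i.1 + 1 then z ⟨k.1, hp⟩ else 0) = z k; rw [dif_pos k.2]
    rw [this]
    rfl
  -- y nonzero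
  obtain ⟨k0, hk0⟩ := Function.ne_iff.1 hz
  have hyk : y (Fin.castLE hi1n k0) ≠ 0 := by
    have : y (Fin.castLE hi1n k0) = z k0 := by
      show (if hp : k0.1 < i.1 + 1 then z ⟨k0.1, hp⟩ else 0) = z k0; rw [dif_pos k0.2]
    rw [this]; exact hk0
  -- sums
  have hsum1 : ∑ j, x j ^ 2 = ∑ p, y p ^ 2 := by
    have h := quad_transfer M 1 y
    rw [Matrix.mul_one, hM1] at h
    simpa [dotProduct, pow_two] using h
  have hsum2 : ∑ j, μ j * x j ^ 2 = ∑ p, μc p * y p ^ 2 := by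
    have h := quad_transfer M (Matrix.diagonal μ) y
    rw [hM2] at h
    rw [← dot_diag μ x, ← dot_diag μc y]
    exact h
  have hypos : 0 < ∑ p, y p ^ 2 :=
    Finset.sum_pos' (fun p _ => sq_nonneg _)
      ⟨_, Finset.mem_univ _, by positivity⟩
  -- bounds
  have hbA : ∑ p, μc p * y p ^ 2 ≤ μc i * ∑ p, y p ^ 2 := by
    rw [Finset.mul_sum]
    refine Finset.sum_le_sum fun p _ => ?_
    by_cases hp : p.1 < i.1 + 1
    · exact mul_le_mul_of_nonneg_right (hμc (by omega : p ≤ i)) (sq_nonneg _)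
    · rw [hy0 p (by omega)]; simp
  have hbB : μ (Fin.castLE hnN i) * ∑ j, x j ^ 2 ≤ ∑ j, μ j * x j ^ 2 := by
    rw [Finset.mul_sum]
    refine Finset.sum_le_sum fun j _ => ?_
    by_cases hj : j.1 < i.1
    · rw [hx0 j hj]; simp
    · exact mul_le_mul_of_nonneg_right (hμ (by simp [Fin.le_def]; omega)) (sq_nonneg _)
  have : μ (Fin.castLE hnN i) * ∑ p, y p ^ 2 ≤ μc i * ∑ p, y p ^ 2 := by
    calc μ (Fin.castLE hnN i) * ∑ p, y p ^ 2 = μ (Fin.castLE hnN i) * ∑ j, x j ^ 2 := by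
          rw [hsum1]
      _ ≤ ∑ j, μ j * x j ^ 2 := hbB
      _ = ∑ p, μc p * y p ^ 2 := hsum2
      _ ≤ μc i * ∑ p, y p ^ 2 := hbA
  exact le_of_mul_le_mul_right this hypos
end core

section core2
variable {N n : ℕ}

lemma core_upper (hnN : n ≤ N) (μ : Fin N → ℝ) (μc : Fin n → ℝ)
    (hμ : Monotone μ) (hμc : Monotone μc)
    (M : Matrix (Fin N) (Fin n) ℝ) (hM1 : Mᵀ * M = 1)
    (hM2 : Mᵀ * Matrix.diagonal μ * M = Matrix.diagonal μc) (i : Fin n) :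
    μc i ≤ μ ⟨i.1 + N - n, by have := i.2; omega⟩ := by
  have hin : i.1 < n := i.2
  have hlt : n - i.1 - 1 < n - i.1 := by omega
  obtain ⟨z, hz, hKz⟩ := exists_ker hlt
    (fun (j : Fin (n - i.1 - 1)) (k : Fin (n - i.1)) =>
      M ⟨j.1 + (i.1 + N - n) + 1, by have := j.2; omega⟩ ⟨k.1 + i.1, by have := k.2; omega⟩)
  set y : Fin n → ℝ := fun p => if hp : i.1 ≤ p.1 then z ⟨p.1 - i.1, by omega⟩ else 0 with hy
  set x : Fin N → ℝ := M *ᵥ y with hx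
  have hy0 : ∀ p : Fin n, p.1 < i.1 → y p = 0 := fun p hp => by
    simp only [hy]; exact dif_neg (by omega)
  have hyz : ∀ k : Fin (n - i.1), y ⟨k.1 + i.1, by omega⟩ = z k := by
    intro k
    have h1 : i.1 ≤ k.1 + i.1 := Nat.le_add_left _ _
    simp only [hy, dif_pos h1]
    congr 1
    exact Fin.val_injective (by simp)
  have hx0 : ∀ j : Fin N, i.1 + N - n < j.1 → x j = 0 := by
    intro j hj
    have hxj : x j = ∑ p, M j p * y p := rfl
    rw [hxj, sum_fin_ge (le_of_lt hin) _ (fun p hp => by rw [hy0 p hp, mul_zero])]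
    have := congrFun hKz ⟨j.1 - (i.1 + N - n) - 1, by have := j.2; omega⟩
    simp only [mulVec, dotProduct, Pi.zero_apply] at this
    rw [← this]
    refine Finset.sum_congr rfl fun k _ => ?_
    rw [hyz k]
    congr 1
    exact congrFun (congrArg M (Fin.val_injective (by simp; omega))) _
  obtain ⟨k0, hk0⟩ := Function.ne_iff.1 hz
  have hyk : y ⟨k0.1 + i.1, by have := k0.2; omega⟩ ≠ 0 := by
    rw [hyz k0]; exact hk0
  have hsum1 : ∑ j, x j ^ 2 = ∑ p, y p ^ 2 := by
    have h := quad_transfer M 1 y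
    rw [Matrix.mul_one, hM1] at h
    simpa [dotProduct, pow_two] using h
  have hsum2 : ∑ j, μ j * x j ^ 2 = ∑ p, μc p * y p ^ 2 := by
    have h := quad_transfer M (Matrix.diagonal μ) y
    rw [hM2] at h
    rw [← dot_diag μ x, ← dot_diag μc y]
    exact h
  have hypos : 0 < ∑ p, y p ^ 2 :=
    Finset.sum_pos' (fun p _ => sq_nonneg _)
      ⟨_, Finset.mem_univ _, by positivity⟩
  have hbA : μc i * ∑ p, y p ^ 2 ≤ ∑ p, μc p * y p ^ 2 := by
    rw [Finset.mul_sum]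
    refine Finset.sum_le_sum fun p _ => ?_
    by_cases hp : i.1 ≤ p.1
    · exact mul_le_mul_of_nonneg_right (hμc (by omega : i ≤ p)) (sq_nonneg _)
    · rw [hy0 p (by omega)]; simp
  have hbB : ∑ j, μ j * x j ^ 2 ≤ μ ⟨i.1 + N - n, by omega⟩ * ∑ j, x j ^ 2 := by
    rw [Finset.mul_sum]
    refine Finset.sum_le_sum fun j _ => ?_
    by_cases hj : j.1 ≤ i.1 + N - n
    · exact mul_le_mul_of_nonneg_right (hμ (by simp [Fin.le_def]; omega)) (sq_nonneg _)
    · rw [hx0 j (by omega)]; simp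
  have : μc i * ∑ p, y p ^ 2 ≤ μ ⟨i.1 + N - n, by omega⟩ * ∑ p, y p ^ 2 := by
    calc μc i * ∑ p, y p ^ 2 ≤ ∑ p, μc p * y p ^ 2 := hbA
      _ = ∑ j, μ j * x j ^ 2 := hsum2.symm
      _ ≤ μ ⟨i.1 + N - n, by omega⟩ * ∑ j, x j ^ 2 := hbB
      _ = μ ⟨i.1 + N - n, by omega⟩ * ∑ p, y p ^ 2 := by rw [hsum1]
  exact le_of_mul_le_mul_right this hypos
end core2

open Polynomial in
lemma charpoly_orth_diag {m : ℕ} {Q A : Matrix (Fin m) (Fin m) ℝ}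
    (hQ : Qᵀ * Q = 1) {d : Fin m → ℝ} (hd : Qᵀ * A * Q = Matrix.diagonal d) :
    A.charpoly = ∏ i, (X - C (d i)) := by
  have hQ' : Q * Qᵀ = 1 := mul_eq_one_comm.mp hQ
  have hA : A = Q * Matrix.diagonal d * Qᵀ := by
    rw [← hd, ← Matrix.mul_assoc, ← Matrix.mul_assoc, hQ', Matrix.one_mul,
      Matrix.mul_assoc, hQ', Matrix.mul_one]
  set Qp := Q.map (C : ℝ →+* ℝ[X]) with hQp
  have hmap : ∀ (X' Y' : Matrix (Fin m) (Fin m) ℝ), (X' * Y').map (C : ℝ →+* ℝ[X])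
      = X'.map (C : ℝ →+* ℝ[X]) * Y'.map (C : ℝ →+* ℝ[X]) :=
    fun X' Y' => Matrix.map_mul
  have hQpQ : Qpᵀ * Qp = 1 := by
    rw [hQp, ← Matrix.transpose_map, ← hmap, hQ]
    simp
  have hcm : charmatrix A = Qp * charmatrix (Matrix.diagonal d) * Qpᵀ := by
    rw [charmatrix, charmatrix, Matrix.mul_sub, Matrix.sub_mul]
    congr 1
    · rw [← (Matrix.scalar_commute (X : ℝ[X]) (fun r' => Commute.all _ _) Qp).eq,
        Matrix.mul_assoc, mul_eq_one_comm.mp hQpQ, Matrix.mul_one]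
    · simp only [RingHom.mapMatrix_apply, hQp, ← Matrix.transpose_map]
      rw [← hmap, ← hmap, ← hA]
  have hdet : A.charpoly = (Matrix.diagonal d).charpoly := by
    rw [Matrix.charpoly, Matrix.charpoly, hcm, Matrix.det_mul, Matrix.det_mul]
    have : Qp.det * Qpᵀ.det = 1 := by
      rw [mul_comm, ← Matrix.det_mul, hQpQ, Matrix.det_one]
    ring_nf
    rw [Matrix.det_transpose] at this ⊢
    calc Qp.det * (Matrix.diagonal d).charmatrix.det * Qp.det
        = (Qp.det * Qp.det) * (Matrix.diagonal d).charmatrix.det := by ring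
      _ = (Matrix.diagonal d).charmatrix.det := by rw [this, one_mul]
  rw [hdet, Matrix.charpoly_of_upperTriangular _ (Matrix.blockTriangular_diagonal d)]
  simp

lemma multiset_ofFn {m : ℕ} (f : Fin m → ℝ) :
    Finset.univ.val.map f = ↑(List.ofFn f) := by
  rw [List.ofFn_eq_map, Fin.univ_def]
  rfl

lemma eq_comp_sort {m : ℕ} (μ ev : Fin m → ℝ) (hμ : Monotone μ)
    (hms : Finset.univ.val.map μ = Finset.univ.val.map ev) :
    μ = ev ∘ Tuple.sort ev := by
  have hperm : List.Perm (List.ofFn μ) (List.ofFn (ev ∘ Tuple.sort ev)) := by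
    refine (Multiset.coe_eq_coe.1 ?_).trans ((Tuple.sort ev).ofFn_comp_perm ev).symm
    rw [← multiset_ofFn, ← multiset_ofFn, hms]
  exact List.ofFn_injective <| List.Perm.eq_of_sortedLE
    hμ.sortedLE_ofFn (Tuple.monotone_sort ev).sortedLE_ofFn hperm

lemma prod_X_sub_C_inj {m : ℕ} (μ ev : Fin m → ℝ)
    (h : ∏ i, (Polynomial.X - Polynomial.C (μ i)) = ∏ i, (Polynomial.X - Polynomial.C (ev i))) :
    Finset.univ.val.map μ = Finset.univ.val.map ev := by
  have e : ∀ f : Fin m → ℝ, ((Finset.univ.val.map f).map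
      (fun a => Polynomial.X - Polynomial.C a)).prod = ∏ i, (Polynomial.X - Polynomial.C (f i)) :=
    fun f => by rw [Multiset.map_map]; rfl
  have h1 := Polynomial.roots_multiset_prod_X_sub_C (Finset.univ.val.map μ)
  have h2 := Polynomial.roots_multiset_prod_X_sub_C (Finset.univ.val.map ev)
  rw [e, h] at h1
  rw [e] at h2
  rw [← h1, ← h2]

lemma exists_orthdiag {m : ℕ} {A : Matrix (Fin m) (Fin m) ℝ} (hA : A.IsHermitian)
    {μ : Fin m → ℝ} (h : sortedEigs A μ) :
    ∃ Q : Matrix (Fin m) (Fin m) ℝ, Qᵀ * Q = 1 ∧ Qᵀ * A * Q = Matrix.diagonal μ := by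
  set Q₀ : Matrix (Fin m) (Fin m) ℝ :=
    (Matrix.IsHermitian.eigenvectorUnitary hA : Matrix (Fin m) (Fin m) ℝ) with hQ₀
  have hQ₀1 : Q₀ᵀ * Q₀ = 1 := by
    have := (Matrix.IsHermitian.eigenvectorUnitary hA).2.1
    rwa [Matrix.star_eq_conjTranspose, Matrix.conjTranspose_eq_transpose_of_trivial] at this
  have hdiag : Q₀ᵀ * A * Q₀ = Matrix.diagonal hA.eigenvalues := by
    have := hA.conjStarAlgAut_star_eigenvectorUnitary
    rwa [Unitary.conjStarAlgAut_apply, Unitary.coe_star, star_star, Matrix.star_eq_conjTranspose, Matrix.conjTranspose_eq_transpose_of_trivial,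
      RCLike.ofReal_real_eq_id, Function.id_comp] at this
  have hchar := charpoly_orth_diag hQ₀1 hdiag
  have hms := prod_X_sub_C_inj μ hA.eigenvalues (by rw [← h.2, hchar])
  have hcomp := eq_comp_sort μ hA.eigenvalues h.1 hms
  set σ := Tuple.sort hA.eigenvalues with hσ
  refine ⟨Q₀.submatrix id ⇑σ, ?_, ?_⟩
  · rw [Matrix.transpose_submatrix,
      (Matrix.submatrix_mul Q₀ᵀ Q₀ ⇑σ id ⇑σ Function.bijective_id).symm, hQ₀1,
      Matrix.submatrix_one_equiv]
  · rw [Matrix.transpose_submatrix]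
    have hAid : A = A.submatrix (id : Fin m → Fin m) id := by simp
    rw [hAid, (Matrix.submatrix_mul Q₀ᵀ A ⇑σ id id Function.bijective_id).symm,
      (Matrix.submatrix_mul (Q₀ᵀ * A) Q₀ ⇑σ id ⇑σ Function.bijective_id).symm,
      hdiag, Matrix.submatrix_diagonal _ _ σ.injective, hcomp]

section graph
variable {N n : ℕ} (f : Fin N → Fin n) (W : Matrix (Fin N) (Fin N) ℝ)

lemma deg_coarse (p : Fin n) :
    deg (coarse f W) p = ∑ i, (if f i = p then deg W i else 0) := by
  simp only [deg, coarse, Matrix.mul_apply, partMat, Matrix.transpose_apply]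
  rw [Finset.sum_comm]
  simp only [mul_ite, mul_one, mul_zero, Finset.sum_ite_eq, Finset.mem_univ, if_true]
  rw [Finset.sum_comm]
  simp only [ite_mul, one_mul, zero_mul, ← Finset.sum_ite_eq]
  refine Finset.sum_congr rfl fun i _ => ?_
  by_cases h : f i = p <;> simp [h, Finset.mul_sum]

lemma deg_coarse_pos (hdeg : ∀ i, 0 < deg W i) (hsurj : Function.Surjective f) (p : Fin n) :
    0 < deg (coarse f W) p := by
  rw [deg_coarse]
  obtain ⟨i0, hi0⟩ := hsurj p
  refine Finset.sum_pos' (fun i _ => ?_) ⟨i0, Finset.mem_univ _, ?_⟩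
  · by_cases h : f i = p
    · simp [h, (hdeg i).le]
    · simp [h]
  simp [hi0, (hdeg i0).le, hdeg i0]

def cmat : Matrix (Fin n) (Fin N) ℝ :=
  fun p i => if f i = p then Real.sqrt (deg W i) / Real.sqrt (deg (coarse f W) p) else 0

lemma cmat_mul_transpose (hdeg : ∀ i, 0 < deg W i) (hsurj : Function.Surjective f) :
    cmat f W * (cmat f W)ᵀ = 1 := by
  ext p q
  simp only [Matrix.mul_apply, Matrix.transpose_apply, cmat]
  by_cases hpq : p = q
  · subst hpq
    have hdc := deg_coarse_pos f W hdeg hsurj p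
    have : ∀ i : Fin N, (if f i = p then Real.sqrt (deg W i) / Real.sqrt (deg (coarse f W) p)
        else 0) * (if f i = p then Real.sqrt (deg W i) / Real.sqrt (deg (coarse f W) p) else 0)
        = (if f i = p then deg W i else 0) / deg (coarse f W) p := by
      intro i
      by_cases h : f i = p
      · simp only [h, if_true]
        rw [div_mul_div_comm, Real.mul_self_sqrt (hdeg i).le, Real.mul_self_sqrt hdc.le]
      · simp [h]
    rw [Finset.sum_congr rfl fun i _ => this i, ← Finset.sum_div, ← deg_coarse,
      div_self (ne_of_gt hdc)]
    simp
  · rw [Finset.sum_eq_zero fun i _ => ?_]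
    · simp [Matrix.one_apply, hpq]
    · by_cases hq : f i = q
      · rw [if_neg (fun hp : f i = p => hpq (hp.symm.trans hq))]
        simp
      · simp [hq]

lemma cmat_mul_invSqrt (hdeg : ∀ i, 0 < deg W i) :
    cmat f W * invSqrtDeg W = invSqrtDeg (coarse f W) * partMat f := by
  ext p i
  rw [invSqrtDeg, invSqrtDeg, Matrix.mul_diagonal, Matrix.diagonal_mul]
  simp only [cmat, partMat]
  by_cases h : f i = p
  · simp only [h, if_true, mul_one]
    have hs : Real.sqrt (deg W i) ≠ 0 := ne_of_gt (Real.sqrt_pos.2 (hdeg i))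
    field_simp
  · simp [h]

lemma cmat_conj_normLap (hdeg : ∀ i, 0 < deg W i) (hsurj : Function.Surjective f) :
    cmat f W * normLap W * (cmat f W)ᵀ = normLap (coarse f W) := by
  have hS : (invSqrtDeg W)ᵀ = invSqrtDeg W := Matrix.diagonal_transpose _
  have hSc : (invSqrtDeg (coarse f W))ᵀ = invSqrtDeg (coarse f W) := Matrix.diagonal_transpose _
  have hCS := cmat_mul_invSqrt f W hdeg
  have hSCt : invSqrtDeg W * (cmat f W)ᵀ = (partMat f)ᵀ * invSqrtDeg (coarse f W) := by
    have := congrArg Matrix.transpose hCS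
    rwa [Matrix.transpose_mul, Matrix.transpose_mul, hS, hSc] at this
  rw [normLap, normLap, Matrix.mul_sub, Matrix.sub_mul, Matrix.mul_one,
    cmat_mul_transpose f W hdeg hsurj]
  congr 1
  calc cmat f W * (invSqrtDeg W * W * invSqrtDeg W) * (cmat f W)ᵀ
      = (cmat f W * invSqrtDeg W) * W * (invSqrtDeg W * (cmat f W)ᵀ) := by
        simp only [Matrix.mul_assoc]
    _ = invSqrtDeg (coarse f W) * partMat f * W * ((partMat f)ᵀ * invSqrtDeg (coarse f W)) := by
        rw [hCS, hSCt]
    _ = invSqrtDeg (coarse f W) * coarse f W * invSqrtDeg (coarse f W) := by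
        rw [coarse]
        simp only [Matrix.mul_assoc]

lemma normLap_isHermitian (hsymm : W.IsSymm) : (normLap W).IsHermitian := by
  have hS : (invSqrtDeg W)ᵀ = invSqrtDeg W := Matrix.diagonal_transpose _
  rw [Matrix.IsHermitian, Matrix.conjTranspose_eq_transpose_of_trivial, normLap,
    Matrix.transpose_sub, Matrix.transpose_one, Matrix.transpose_mul, Matrix.transpose_mul,
    hS, hsymm.eq, Matrix.mul_assoc]

lemma coarse_isSymm (hsymm : W.IsSymm) : (coarse f W).IsSymm := by
  rw [Matrix.IsSymm, coarse, Matrix.transpose_mul, Matrix.transpose_mul,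
    Matrix.transpose_transpose, hsymm.eq, Matrix.mul_assoc]
end graph


/-- **Eigenvalue interlacing under coarsening.**
If `W` is a weighted graph on `N` nodes coarsened with respect to a surjective partition
map `f : Fin N → Fin n`, then the sorted normalized-Laplacian eigenvalues satisfy
`λ(i) ≤ λ_c(i) ≤ λ(i + N - n)` for every `i`. -/
theorem interlacing {N n : ℕ} (hnN : n ≤ N) (W : Matrix (Fin N) (Fin N) ℝ)
    (hsymm : W.IsSymm) (hnonneg : ∀ i j, 0 ≤ W i j) (hdeg : ∀ i, 0 < deg W i)
    (f : Fin N → Fin n) (hsurj : Function.Surjective f)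
    (μ : Fin N → ℝ) (μc : Fin n → ℝ)
    (hμ : sortedEigs (normLap W) μ)
    (hμc : sortedEigs (normLap (coarse f W)) μc) :
    ∀ i : Fin n,
      μ (Fin.castLE hnN i) ≤ μc i ∧
      μc i ≤ μ ⟨i.1 + N - n, by have := i.2; omega⟩ := by
  intro i
  have hL : (normLap W).IsHermitian := normLap_isHermitian W hsymm
  have hLc : (normLap (coarse f W)).IsHermitian :=
    normLap_isHermitian (coarse f W) (coarse_isSymm f W hsymm)
  obtain ⟨Q, hQ1, hQ2⟩ := exists_orthdiag hL hμ
  obtain ⟨R, hR1, hR2⟩ := exists_orthdiag hLc hμc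
  set Cm := cmat f W with hCm
  have hCC : Cm * Cmᵀ = 1 := cmat_mul_transpose f W hdeg hsurj
  have hCLC : Cm * normLap W * Cmᵀ = normLap (coarse f W) := cmat_conj_normLap f W hdeg hsurj
  set M := Qᵀ * Cmᵀ * R with hM
  have hQQ : Q * Qᵀ = 1 := mul_eq_one_comm.mp hQ1
  have hL' : Q * Matrix.diagonal μ * Qᵀ = normLap W := by
    rw [← hQ2, ← Matrix.mul_assoc, ← Matrix.mul_assoc, hQQ, Matrix.one_mul,
      Matrix.mul_assoc, hQQ, Matrix.mul_one]
  have hMt : Mᵀ = Rᵀ * (Cm * Q) := by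
    rw [hM, Matrix.transpose_mul, Matrix.transpose_mul, Matrix.transpose_transpose,
      Matrix.transpose_transpose]
  have hM1 : Mᵀ * M = 1 := by
    rw [hMt, hM]
    simp only [Matrix.mul_assoc]
    have e1 : Q * (Qᵀ * (Cmᵀ * R)) = Cmᵀ * R := by
      rw [← Matrix.mul_assoc, hQQ, Matrix.one_mul]
    have e2 : Cm * (Cmᵀ * R) = R := by
      rw [← Matrix.mul_assoc, hCC, Matrix.one_mul]
    rw [e1, e2, hR1]
  have hM2 : Mᵀ * Matrix.diagonal μ * M = Matrix.diagonal μc := by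
    rw [hMt, hM]
    simp only [Matrix.mul_assoc]
    have e3 : Q * (Matrix.diagonal μ * (Qᵀ * (Cmᵀ * R))) = normLap W * (Cmᵀ * R) := by
      rw [← Matrix.mul_assoc, ← Matrix.mul_assoc, hL']
    have e4 : Cm * (normLap W * (Cmᵀ * R)) = normLap (coarse f W) * R := by
      rw [← Matrix.mul_assoc, ← Matrix.mul_assoc, hCLC]
    rw [e3, e4, ← Matrix.mul_assoc, hR2]
  exact ⟨core_lower hnN μ μc hμ.1 hμc.1 M hM1 hM2 i,
    core_upper hnN μ μc hμ.1 hμc.1 M hM1 hM2 i⟩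
end
end

section
/- Let W ∈ ℝ^{N×N} be a symmetric matrix with nonnegative entries and positive degrees, let W_c = P W Pᵀ be its coarse graph with respect to a partition into n nonempty parts with normalized Laplacian L_c, and let W_l be the lifted graph with normalized Laplacian L_l. Then the characteristic polynomial of L_l equals (x − 1)^{N−n} times the characteristic polynomial of L_c; in particular, the multiset of eigenvalues of L_l consists of all n eigenvalues of L_c together with the eigenvalue 1 repeated N − n times. -/
open Matrix BigOperators

noncomputable section

namespace LiftedAux
open Matrix Polynomial

set_option maxHeartbeats 1000000 in
set_option synthInstance.maxHeartbeats 1000000 in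
lemma charpoly_conj {N n : ℕ} (hn : n ≤ N) (Q : Matrix (Fin n) (Fin N) ℝ)
    (B : Matrix (Fin n) (Fin n) ℝ) (hQ : Q * Qᵀ = 1) :
    (1 - Qᵀ * B * Q).charpoly = (X - Polynomial.C 1) ^ (N - n) * (1 - B).charpoly := by
  set φ : ℝ[X] →+* RatFunc ℝ := algebraMap ℝ[X] (RatFunc ℝ) with hφ
  have hinj : Function.Injective φ := IsFractionRing.injective ℝ[X] (RatFunc ℝ)
  apply hinj
  set ψ : ℝ →+* RatFunc ℝ := φ.comp (Polynomial.C : ℝ →+* ℝ[X]) with hψ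
  set u : RatFunc ℝ := φ (X - Polynomial.C 1) with hu
  have hu0 : u ≠ 0 := by
    rw [hu]
    simp only [ne_eq, map_eq_zero_iff φ hinj]
    exact X_sub_C_ne_zero 1
  have key : ∀ (m : ℕ) (M : Matrix (Fin m) (Fin m) ℝ),
      (φ.mapMatrix (charmatrix (1 - M)) : Matrix (Fin m) (Fin m) (RatFunc ℝ))
        = u • (1 : Matrix (Fin m) (Fin m) (RatFunc ℝ)) + M.map ψ := by
    intro m M
    ext i j
    by_cases h : i = j
    · subst h
      simp [charmatrix_apply, Matrix.one_apply, Matrix.sub_apply, hu, hψ, map_sub]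
      ring
    · simp [charmatrix_apply, Matrix.one_apply, Matrix.sub_apply, h,
        Matrix.diagonal_apply_ne _ h, hψ]
  have hmap : ((Qᵀ * B * Q).map ψ : Matrix (Fin N) (Fin N) (RatFunc ℝ))
      = (Q.map ψ)ᵀ * (B.map ψ) * (Q.map ψ) := by
    rw [Matrix.map_mul, Matrix.map_mul, Matrix.transpose_map]
  have hQψ : (Q.map ψ) * (Q.map ψ)ᵀ = 1 := by
    rw [← Matrix.transpose_map, ← Matrix.map_mul, hQ, Matrix.map_one ψ (map_zero ψ) (map_one ψ)]
  set Q' := Q.map ψ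
  set B' := B.map ψ
  rw [Matrix.charpoly, Matrix.charpoly, RingHom.map_det, _root_.map_mul, map_pow,
    RingHom.map_det, key, key, hmap]
  have step1 : (u • 1 + Q'ᵀ * B' * Q' : Matrix (Fin N) (Fin N) (RatFunc ℝ))
      = u • (1 + Q'ᵀ * (u⁻¹ • (B' * Q'))) := by
    rw [smul_add, Matrix.mul_smul, smul_smul, mul_inv_cancel₀ hu0, one_smul, Matrix.mul_assoc]
  rw [step1, Matrix.det_smul, Matrix.det_one_add_mul_comm, Matrix.smul_mul, Matrix.mul_assoc,
    hQψ, Matrix.mul_one]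
  have step2 : (1 + u⁻¹ • B' : Matrix (Fin n) (Fin n) (RatFunc ℝ)) = u⁻¹ • (u • 1 + B') := by
    rw [smul_add, smul_smul, inv_mul_cancel₀ hu0, one_smul]
  rw [step2, Matrix.det_smul]
  simp only [Fintype.card_fin]
  rw [← hu, pow_sub₀ u hu0 hn]
  ring

lemma partSize_pos {N n : ℕ} (f : Fin N → Fin n) (hsurj : Function.Surjective f) (p : Fin n) :
    0 < partSize f p := by
  obtain ⟨i, hi⟩ := hsurj p
  exact Finset.card_pos.2 ⟨i, by simp [partSize, hi]⟩

lemma deg_coarse {N n : ℕ} (f : Fin N → Fin n) (W : Matrix (Fin N) (Fin N) ℝ) (p : Fin n) :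
    deg (coarse f W) p = ∑ i ∈ Finset.univ.filter (fun i => f i = p), deg W i := by
  unfold deg coarse
  simp only [Matrix.mul_apply, Matrix.transpose_apply, partMat]
  rw [Finset.sum_comm]
  have h1 : ∀ j, ∑ q, (∑ k, (if f k = p then (1:ℝ) else 0) * W k j) * (if f j = q then (1:ℝ) else 0)
      = ∑ k, (if f k = p then (1:ℝ) else 0) * W k j := by
    intro j
    simp [mul_ite, mul_zero, mul_one, Finset.sum_ite_eq]
  simp only [h1]
  rw [Finset.sum_comm, Finset.sum_filter]
  congr 1
  ext k
  simp [ite_mul, Finset.mul_sum]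

lemma deg_coarse_pos {N n : ℕ} (f : Fin N → Fin n) (W : Matrix (Fin N) (Fin N) ℝ)
    (hsurj : Function.Surjective f) (hdeg : ∀ i, 0 < deg W i) (p : Fin n) :
    0 < deg (coarse f W) p := by
  rw [deg_coarse]
  apply Finset.sum_pos (fun i _ => hdeg i)
  obtain ⟨i, hi⟩ := hsurj p
  exact ⟨i, by simp [hi]⟩

lemma deg_lift {N n : ℕ} (f : Fin N → Fin n) (W : Matrix (Fin N) (Fin N) ℝ)
    (hsurj : Function.Surjective f) (i : Fin N) :
    deg (liftG f W) i = deg (coarse f W) (f i) / (partSize f (f i) : ℝ) := by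
  unfold deg liftG
  rw [← Finset.sum_fiberwise Finset.univ f
    (fun j => coarse f W (f i) (f j) / ((partSize f (f i) : ℝ) * (partSize f (f j) : ℝ)))]
  have h1 : ∀ q, ∑ j ∈ Finset.univ.filter (fun j => f j = q),
      coarse f W (f i) (f j) / ((partSize f (f i) : ℝ) * (partSize f (f j) : ℝ))
      = coarse f W (f i) q / (partSize f (f i) : ℝ) := by
    intro q
    rw [Finset.sum_congr rfl (fun j hj => by
      rw [(Finset.mem_filter.1 hj).2])]
    rw [Finset.sum_const]
    have hq : ((partSize f q : ℝ)) ≠ 0 := by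
      exact_mod_cast (partSize_pos f hsurj q).ne'
    show (partSize f q : ℕ) • _ = _
    rw [nsmul_eq_mul, ← mul_div_assoc,
      mul_comm ((partSize f (f i) : ℝ)) ((partSize f q : ℝ)), mul_div_mul_left _ _ hq]
  simp only [h1]
  rw [← Finset.sum_div]

lemma coarsen_mul_transpose {N n : ℕ} (f : Fin N → Fin n) (hsurj : Function.Surjective f) :
    coarsenMat f * (coarsenMat f)ᵀ = 1 := by
  ext p q
  rw [Matrix.mul_apply, Matrix.one_apply]
  simp only [coarsenMat, Matrix.transpose_apply]
  by_cases h : p = q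
  · subst h
    simp only [if_pos rfl]
    have h1 : ∀ i : Fin N, (if f i = p then (Real.sqrt (partSize f p : ℝ))⁻¹ else 0) *
        (if f i = p then (Real.sqrt (partSize f p : ℝ))⁻¹ else 0)
        = if f i = p then (Real.sqrt (partSize f p : ℝ))⁻¹ * (Real.sqrt (partSize f p : ℝ))⁻¹ else 0 := by
      intro i; split_ifs <;> simp
    simp only [h1]
    rw [← Finset.sum_filter, Finset.sum_const, nsmul_eq_mul]
    have hs : (0:ℝ) < (partSize f p : ℝ) := by exact_mod_cast partSize_pos f hsurj p
    have h2 : (Real.sqrt (partSize f p : ℝ))⁻¹ * (Real.sqrt (partSize f p : ℝ))⁻¹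
        = ((partSize f p : ℝ))⁻¹ := by
      rw [← mul_inv, Real.mul_self_sqrt hs.le]
    have hcard : ((Finset.filter (fun a => f a = p) Finset.univ).card : ℝ) = (partSize f p : ℝ) := rfl
    rw [h2, hcard, mul_inv_cancel₀ hs.ne']
    simp
  · rw [if_neg h]
    apply Finset.sum_eq_zero
    intro i _
    split_ifs with h1 h2
    · exact absurd (h1 ▸ h2 : p = q) h
    all_goals simp

lemma sqrt_scalar (a b c e w : ℝ) (ha : 0 < a) (hb : 0 < b) (hc : 0 < c) (he : 0 < e) :
    (Real.sqrt (a/b))⁻¹ * (w/(b*e)) * (Real.sqrt (c/e))⁻¹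
      = (Real.sqrt b)⁻¹ * ((Real.sqrt a)⁻¹ * w * (Real.sqrt c)⁻¹) * (Real.sqrt e)⁻¹ := by
  have h1 : Real.sqrt (a/b) = Real.sqrt a / Real.sqrt b := Real.sqrt_div ha.le b
  have h2 : Real.sqrt (c/e) = Real.sqrt c / Real.sqrt e := Real.sqrt_div hc.le e
  have hb' : b = Real.sqrt b * Real.sqrt b := (Real.mul_self_sqrt hb.le).symm
  have he' : e = Real.sqrt e * Real.sqrt e := (Real.mul_self_sqrt he.le).symm
  have ha0 : Real.sqrt a ≠ 0 := (Real.sqrt_pos.2 ha).ne'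
  have hb0 : Real.sqrt b ≠ 0 := (Real.sqrt_pos.2 hb).ne'
  have hc0 : Real.sqrt c ≠ 0 := (Real.sqrt_pos.2 hc).ne'
  have he0 : Real.sqrt e ≠ 0 := (Real.sqrt_pos.2 he).ne'
  rw [h1, h2]
  rw [show w/(b*e) = w/((Real.sqrt b * Real.sqrt b)*(Real.sqrt e * Real.sqrt e)) by rw [← hb', ← he']]
  field_simp

lemma conj_eq {N n : ℕ} (f : Fin N → Fin n) (W : Matrix (Fin N) (Fin N) ℝ)
    (hsurj : Function.Surjective f) (hdeg : ∀ i, 0 < deg W i) :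
    invSqrtDeg (liftG f W) * liftG f W * invSqrtDeg (liftG f W)
      = (coarsenMat f)ᵀ * (invSqrtDeg (coarse f W) * coarse f W * invSqrtDeg (coarse f W))
          * coarsenMat f := by
  have hA : ∀ p q, (invSqrtDeg (coarse f W) * coarse f W * invSqrtDeg (coarse f W)) p q
      = (Real.sqrt (deg (coarse f W) p))⁻¹ * coarse f W p q * (Real.sqrt (deg (coarse f W) q))⁻¹ := by
    intro p q
    simp [invSqrtDeg, Matrix.mul_diagonal, Matrix.diagonal_mul]
  ext i j
  have hL : (invSqrtDeg (liftG f W) * liftG f W * invSqrtDeg (liftG f W)) i j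
      = (Real.sqrt (deg (liftG f W) i))⁻¹ * liftG f W i j * (Real.sqrt (deg (liftG f W) j))⁻¹ := by
    simp [invSqrtDeg, Matrix.mul_diagonal, Matrix.diagonal_mul]
  have hR : ((coarsenMat f)ᵀ * (invSqrtDeg (coarse f W) * coarse f W * invSqrtDeg (coarse f W))
      * coarsenMat f) i j
      = (Real.sqrt (partSize f (f i) : ℝ))⁻¹
        * ((invSqrtDeg (coarse f W) * coarse f W * invSqrtDeg (coarse f W)) (f i) (f j))
        * (Real.sqrt (partSize f (f j) : ℝ))⁻¹ := by
    rw [Matrix.mul_apply]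
    simp only [Matrix.mul_apply, Matrix.transpose_apply, coarsenMat, ite_mul, zero_mul,
      mul_ite, mul_zero, Finset.sum_ite_eq, Finset.mem_univ, if_true]
  rw [hL, hR, hA, deg_lift f W hsurj i, deg_lift f W hsurj j]
  have hdc : ∀ p, 0 < deg (coarse f W) p := deg_coarse_pos f W hsurj hdeg
  have hps : ∀ p, (0:ℝ) < (partSize f p : ℝ) := by
    intro p; exact_mod_cast partSize_pos f hsurj p
  rw [show liftG f W i j = coarse f W (f i) (f j)
      / ((partSize f (f i) : ℝ) * (partSize f (f j) : ℝ)) from rfl]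
  exact sqrt_scalar _ _ _ _ _ (hdc (f i)) (hps (f i)) (hdc (f j)) (hps (f j))

end LiftedAux


/-- **Eigenvalue preservation under lifting.**
The characteristic polynomial of the normalized Laplacian of the lifted graph equals
`(X - 1)^(N - n)` times that of the coarse graph; in particular the multiset of
eigenvalues of `L_l` consists of those of `L_c` plus the eigenvalue `1` with
multiplicity `N - n`. -/
theorem lifted_charpoly {N n : ℕ} (W : Matrix (Fin N) (Fin N) ℝ)
    (hsymm : W.IsSymm) (hnonneg : ∀ i j, 0 ≤ W i j) (hdeg : ∀ i, 0 < deg W i)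
    (f : Fin N → Fin n) (hsurj : Function.Surjective f) :
    (normLap (liftG f W)).charpoly =
        (Polynomial.X - Polynomial.C 1) ^ (N - n) * (normLap (coarse f W)).charpoly ∧
    (normLap (liftG f W)).charpoly.roots =
        Multiset.replicate (N - n) (1 : ℝ) + (normLap (coarse f W)).charpoly.roots := by
  have hn : n ≤ N := by simpa using Fintype.card_le_of_surjective f hsurj
  have hQ := LiftedAux.coarsen_mul_transpose f hsurj
  have hmain : normLap (liftG f W) = 1 - (coarsenMat f)ᵀ
      * (invSqrtDeg (coarse f W) * coarse f W * invSqrtDeg (coarse f W)) * coarsenMat f := by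
    rw [normLap, LiftedAux.conj_eq f W hsurj hdeg]
  have h1 : (normLap (liftG f W)).charpoly
      = (Polynomial.X - Polynomial.C 1) ^ (N - n) * (normLap (coarse f W)).charpoly := by
    rw [hmain, LiftedAux.charpoly_conj hn _ _ hQ]
    rfl
  refine ⟨h1, ?_⟩
  have hne : (Polynomial.X - Polynomial.C (1:ℝ)) ^ (N - n) * (normLap (coarse f W)).charpoly ≠ 0 :=
    mul_ne_zero (pow_ne_zero _ (Polynomial.X_sub_C_ne_zero 1))
      (Matrix.charpoly_monic _).ne_zero
  rw [h1, Polynomial.roots_mul hne, Polynomial.roots_pow, Polynomial.roots_X_sub_C,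
    Multiset.nsmul_singleton]
end
end

section
/- Let W ∈ ℝ^{N×N} be a symmetric matrix with nonnegative entries and positive degrees, coarsened with respect to a partition of {1,…,N} into n nonempty sets S_1,…,S_n. Suppose every two nodes in the same partition have equal normalized edge-weight vectors, i.e., w(i)/d(i) = w(j)/d(j) whenever i, j ∈ S_p for some p, where w(i) is the i-th row of W and d(i) its row sum. Then the sorted eigenvalue sequence of the normalized Laplacian L of W equals the sorted eigenvalue sequence of the normalized Laplacian L_l of the lifted graph W_l; in particular the full spectral distance SD_full(G, G_c) = Σ_{i=1}^N |λ(i) − λ_l(i)| equals 0. -/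
open Matrix BigOperators

noncomputable section

/-! ### Auxiliary lemmas -/

open Polynomial in
lemma my_charpoly_mul_comm {N : ℕ} (A B : Matrix (Fin N) (Fin N) ℝ) :
    (A * B).charpoly = (B * A).charpoly := by
  classical
  set K := FractionRing (Polynomial ℝ) with hK
  have hinj : Function.Injective (algebraMap (Polynomial ℝ) K) :=
    IsFractionRing.injective _ _
  apply hinj
  set φ : Polynomial ℝ →+* K := (algebraMap (Polynomial ℝ) K : Polynomial ℝ →+* K) with hφ
  have hx : (φ X) ≠ 0 := by
    intro h
    have : (X : Polynomial ℝ) = 0 := hinj (h.trans (map_zero φ).symm)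
    simpa using this
  have hcm : ∀ M M' : Matrix (Fin N) (Fin N) ℝ,
      (charmatrix (M * M')).map φ
        = φ X • (1 : Matrix (Fin N) (Fin N) K)
          - (M.map (φ.comp C)) * (M'.map (φ.comp C)) := by
    intro M M'
    ext i j
    by_cases h : i = j
    · subst h
      simp [charmatrix_apply_eq, Matrix.mul_apply, map_sum]
    · simp [charmatrix_apply_ne _ _ _ h, Matrix.one_apply_ne h, Matrix.mul_apply, map_sum]
  have hdet : ∀ M M' : Matrix (Fin N) (Fin N) ℝ,
      φ (M * M').charpoly
        = (φ X) ^ N * ((1 : Matrix (Fin N) (Fin N) K)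
            - (φ X)⁻¹ • ((M.map (φ.comp C)) * (M'.map (φ.comp C)))).det := by
    intro M M'
    rw [Matrix.charpoly, RingHom.map_det, RingHom.mapMatrix_apply, hcm]
    have : φ X • (1 : Matrix (Fin N) (Fin N) K)
          - (M.map (φ.comp C)) * (M'.map (φ.comp C))
        = φ X • ((1 : Matrix (Fin N) (Fin N) K)
            - (φ X)⁻¹ • ((M.map (φ.comp C)) * (M'.map (φ.comp C)))) := by
      rw [smul_sub, smul_smul, mul_inv_cancel₀ hx, one_smul]
    rw [this, Matrix.det_smul]
    simp
  rw [hdet, hdet]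
  congr 1
  have h1 : (φ X)⁻¹ • ((A.map (φ.comp C)) * (B.map (φ.comp C)))
      = ((φ X)⁻¹ • A.map (φ.comp C)) * (B.map (φ.comp C)) := by
    rw [Matrix.smul_mul]
  have h2 : (φ X)⁻¹ • ((B.map (φ.comp C)) * (A.map (φ.comp C)))
      = (B.map (φ.comp C)) * ((φ X)⁻¹ • A.map (φ.comp C)) := by
    rw [Matrix.mul_smul]
  rw [h1, h2, Matrix.det_one_sub_mul_comm]

open Polynomial in
lemma my_charpoly_one_sub {N : ℕ} (A B : Matrix (Fin N) (Fin N) ℝ)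
    (h : A.charpoly = B.charpoly) :
    (1 - A).charpoly = (1 - B).charpoly := by
  classical
  set φ : Polynomial ℝ →+* Polynomial ℝ :=
    (Polynomial.aeval (1 - X : Polynomial ℝ) : Polynomial ℝ →ₐ[ℝ] Polynomial ℝ).toRingHom with hφ
  have key : ∀ M : Matrix (Fin N) (Fin N) ℝ,
      (1 - M).charpoly = (-1 : Polynomial ℝ) ^ N * φ M.charpoly := by
    intro M
    have hcm : charmatrix (1 - M) = - (charmatrix M).map φ := by
      ext i j
      by_cases hij : i = j
      · subst hij
        simp [charmatrix_apply_eq, Matrix.sub_apply, Matrix.one_apply_eq, hφ]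
        ring
      · simp [charmatrix_apply_ne _ _ _ hij, Matrix.sub_apply, Matrix.one_apply_ne hij, hφ]
    rw [Matrix.charpoly, hcm, Matrix.det_neg, ← RingHom.mapMatrix_apply, ← RingHom.map_det,
      ← Matrix.charpoly]
    simp
  rw [key, key, h]

open Polynomial in
lemma monotone_eq_of_prod_eq {N : ℕ} (μ μl : Fin N → ℝ)
    (hm : Monotone μ) (hml : Monotone μl)
    (h : ∏ i, (X - C (μ i)) = ∏ i, (X - C (μl i))) : μ = μl := by
  classical
  have hroots : (Finset.univ.val.map μ) = (Finset.univ.val.map μl) := by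
    have h1 : ∏ i, (X - C (μ i)) = ((Finset.univ.val.map μ).map fun a => X - C a).prod := by
      rw [Multiset.map_map]; rfl
    have h2 : ∏ i, (X - C (μl i)) = ((Finset.univ.val.map μl).map fun a => X - C a).prod := by
      rw [Multiset.map_map]; rfl
    have := congrArg Polynomial.roots (h1 ▸ h2 ▸ h)
    rwa [roots_multiset_prod_X_sub_C, roots_multiset_prod_X_sub_C] at this
  have hl : (List.ofFn μ : Multiset ℝ) = (List.ofFn μl : Multiset ℝ) := by
    have : (Finset.univ.val : Multiset (Fin N)) = ↑(List.finRange N) := rfl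
    rw [this, Multiset.map_coe, Multiset.map_coe, ← List.ofFn_eq_map, ← List.ofFn_eq_map] at hroots
    exact hroots
  have hperm : (List.ofFn μ).Perm (List.ofFn μl) := Multiset.coe_eq_coe.mp hl
  have heq : List.ofFn μ = List.ofFn μl :=
    hperm.eq_of_sortedLE hm.sortedLE_ofFn hml.sortedLE_ofFn
  funext i
  have := congrArg (fun l => l[(i : ℕ)]?) heq
  simpa [List.getElem?_ofFn] using List.ofFn_injective heq ▸ rfl

def avgMat {N n : ℕ} (f : Fin N → Fin n) : Matrix (Fin N) (Fin N) ℝ :=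
  fun k j => if f k = f j then ((partSize f (f j) : ℝ))⁻¹ else 0

section mainAux
variable {N n : ℕ} (W : Matrix (Fin N) (Fin N) ℝ) (f : Fin N → Fin n)

lemma partSize_pos (hsurj : Function.Surjective f) (p : Fin n) :
    0 < (partSize f p : ℝ) := by
  have : (Finset.univ.filter fun i => f i = p).Nonempty := by
    obtain ⟨i, hi⟩ := hsurj p
    exact ⟨i, by simp [hi]⟩
  exact_mod_cast Finset.card_pos.mpr this

lemma sum_ite_part (q : Fin n) (c : ℝ) :
    (∑ k, if f k = q then c else 0) = (partSize f q : ℝ) * c := by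
  rw [← Finset.sum_filter, Finset.sum_const, partSize, nsmul_eq_mul]

lemma avg_rw (hdeg : ∀ i, 0 < deg W i) (hsurj : Function.Surjective f)
    (hsame : ∀ i j, f i = f j → ∀ k, W i k / deg W i = W j k / deg W j) :
    avgMat f * rwMat W = rwMat W := by
  ext i j
  have hsz := partSize_pos f hsurj (f i)
  have hd := hdeg i
  rw [Matrix.mul_apply]
  have hterm : ∀ k, avgMat f i k * rwMat W k j
      = if f k = f i then ((partSize f (f i) : ℝ))⁻¹ * ((deg W i)⁻¹ * W i j) else 0 := by
    intro k
    by_cases h : f i = f k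
    · have h2 := hsame k i h.symm j
      have hk := hdeg k
      simp only [avgMat, rwMat, Matrix.diagonal_mul, if_pos h, if_pos h.symm, ← h]
      rw [div_eq_div_iff (ne_of_gt hk) (ne_of_gt hd)] at h2
      field_simp
      simp only [if_true]
      field_simp
      nlinarith [h2]
    · simp [avgMat, rwMat, Matrix.diagonal_mul, if_neg h, if_neg (Ne.symm h)]
  rw [Finset.sum_congr rfl (fun k _ => hterm k), sum_ite_part,
    rwMat, Matrix.diagonal_mul]
  field_simp

end mainAux

section main2
variable {N n : ℕ} (W : Matrix (Fin N) (Fin N) ℝ) (f : Fin N → Fin n)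

lemma hW_scale (hdeg : ∀ i, 0 < deg W i)
    (hsame : ∀ i j, f i = f j → ∀ k, W i k / deg W i = W j k / deg W j)
    (i a b : Fin N) (hfa : f a = f i) :
    W a b = deg W a * W i b / deg W i := by
  have h := hsame a i hfa b
  rw [div_eq_div_iff (ne_of_gt (hdeg a)) (ne_of_gt (hdeg i))] at h
  rw [eq_div_iff (ne_of_gt (hdeg i))]
  linarith [h]

lemma coarse_eq (hdeg : ∀ i, 0 < deg W i)
    (hsame : ∀ i j, f i = f j → ∀ k, W i k / deg W i = W j k / deg W j)
    (i : Fin N) (q : Fin n) :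
    coarse f W (f i) q
      = (∑ a, if f a = f i then deg W a else 0)
        * (∑ b, if f b = q then W i b else 0) / deg W i := by
  have hrow : ∀ b, (∑ a, (if f a = f i then (1:ℝ) else 0) * W a b)
      = (∑ a, if f a = f i then deg W a else 0) * W i b / deg W i := by
    intro b
    rw [Finset.sum_mul, Finset.sum_div]
    apply Finset.sum_congr rfl
    intro a _
    by_cases h : f a = f i
    · rw [if_pos h, if_pos h, one_mul, hW_scale W f hdeg hsame i a b h]
    · simp [if_neg h]
  have : coarse f W (f i) q
      = ∑ b, (∑ a, (if f a = f i then (1:ℝ) else 0) * W a b) * (if f b = q then (1:ℝ) else 0) := by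
    simp [coarse, partMat, Matrix.mul_apply, Matrix.transpose_apply, Finset.sum_mul]
  rw [this]
  rw [Finset.sum_congr rfl (fun b _ => by rw [hrow b])]
  rw [Finset.mul_sum, Finset.sum_div]
  apply Finset.sum_congr rfl
  intro b _
  by_cases h : f b = q
  · rw [if_pos h, if_pos h]; ring
  · simp [if_neg h]

lemma sum_Tq (i : Fin N) :
    (∑ q, ∑ b, if f b = q then W i b else 0) = deg W i := by
  have : ∀ q, (∑ b, if f b = q then W i b else 0)
      = ∑ b ∈ Finset.univ.filter (fun b => f b = q), W i b := by
    intro q; rw [Finset.sum_filter]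
  rw [Finset.sum_congr rfl (fun q _ => this q)]
  rw [Finset.sum_fiberwise]
  rfl

lemma Dp_pos (hdeg : ∀ i, 0 < deg W i) (i : Fin N) :
    0 < ∑ a, if f a = f i then deg W a else 0 := by
  apply Finset.sum_pos'
  · intro a _
    by_cases h : f a = f i
    · rw [if_pos h]; exact le_of_lt (hdeg a)
    · simp [if_neg h]
  · exact ⟨i, Finset.mem_univ i, by simp [hdeg i]⟩

lemma deg_lift (hdeg : ∀ i, 0 < deg W i) (hsurj : Function.Surjective f)
    (hsame : ∀ i j, f i = f j → ∀ k, W i k / deg W i = W j k / deg W j)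
    (i : Fin N) :
    deg (liftG f W) i
      = (∑ a, if f a = f i then deg W a else 0) / (partSize f (f i) : ℝ) := by
  have hfib : deg (liftG f W) i
      = ∑ q, (partSize f q : ℝ)
          * (coarse f W (f i) q / ((partSize f (f i) : ℝ) * (partSize f q : ℝ))) := by
    rw [deg]
    simp only [liftG]
    rw [← Finset.sum_fiberwise' Finset.univ f
      (fun q => coarse f W (f i) q / ((partSize f (f i) : ℝ) * (partSize f q : ℝ)))]
    apply Finset.sum_congr rfl
    intro q _
    rw [Finset.sum_const, nsmul_eq_mul]
    rfl
  rw [hfib]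
  have hstep : ∀ q, (partSize f q : ℝ)
        * (coarse f W (f i) q / ((partSize f (f i) : ℝ) * (partSize f q : ℝ)))
      = coarse f W (f i) q / (partSize f (f i) : ℝ) := by
    intro q
    have hq := partSize_pos f hsurj q
    rw [mul_comm ((partSize f (f i) : ℝ)) ((partSize f q : ℝ)), ← mul_div_assoc,
      mul_div_mul_left _ _ (ne_of_gt hq)]
  rw [Finset.sum_congr rfl (fun q _ => hstep q)]
  rw [Finset.sum_congr rfl (fun q _ => by rw [coarse_eq W f hdeg hsame i q])]
  rw [← Finset.sum_div, ← Finset.sum_div, ← Finset.mul_sum, sum_Tq,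
    mul_div_assoc, div_self (ne_of_gt (hdeg i)), mul_one]

lemma rw_lift (hdeg : ∀ i, 0 < deg W i) (hsurj : Function.Surjective f)
    (hsame : ∀ i j, f i = f j → ∀ k, W i k / deg W i = W j k / deg W j) :
    rwMat (liftG f W) = rwMat W * avgMat f := by
  ext i j
  have hDp := Dp_pos W f hdeg i
  have hszi := partSize_pos f hsurj (f i)
  have hszj := partSize_pos f hsurj (f j)
  have hd := hdeg i
  have hrhs : (rwMat W * avgMat f) i j
      = (deg W i)⁻¹ * ((partSize f (f j) : ℝ))⁻¹ * (∑ b, if f b = f j then W i b else 0) := by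
    rw [Matrix.mul_apply, Finset.mul_sum]
    apply Finset.sum_congr rfl
    intro k _
    by_cases h : f k = f j
    · simp [rwMat, avgMat, Matrix.diagonal_mul, if_pos h, h]; ring
    · simp [rwMat, avgMat, Matrix.diagonal_mul, if_neg h]
  rw [hrhs]
  have hlhs : rwMat (liftG f W) i j = (deg (liftG f W) i)⁻¹ * liftG f W i j := by
    simp [rwMat, Matrix.diagonal_mul]
  rw [hlhs, deg_lift W f hdeg hsurj hsame i, liftG, coarse_eq W f hdeg hsame i (f j)]
  field_simp

end main2

open Polynomial in
lemma normLap_charpoly_aux {N : ℕ} (V : Matrix (Fin N) (Fin N) ℝ)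
    (hd : ∀ i, 0 ≤ deg V i) :
    (normLap V).charpoly = (1 - rwMat V).charpoly := by
  have hS : invSqrtDeg V * (invSqrtDeg V * V) = rwMat V := by
    rw [← Matrix.mul_assoc, invSqrtDeg, Matrix.diagonal_mul_diagonal, rwMat]
    have h : ∀ i, (Real.sqrt (deg V i))⁻¹ * (Real.sqrt (deg V i))⁻¹ = (deg V i)⁻¹ :=
      fun i => by rw [← mul_inv, Real.mul_self_sqrt (hd i)]
    simp only [h]
  have h1 : (invSqrtDeg V * V * invSqrtDeg V).charpoly = (rwMat V).charpoly := by
    rw [my_charpoly_mul_comm (invSqrtDeg V * V) (invSqrtDeg V), hS]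
  exact my_charpoly_one_sub _ _ h1

/-- **Proposition 4.1: exact spectrum preservation.**
If every two nodes in the same part have equal normalized edge-weight vectors,
then the sorted spectra of the normalized Laplacians of the original and lifted
graphs coincide; in particular the full spectral distance is `0`. -/
theorem spectral_distance_zero {N n : ℕ} (W : Matrix (Fin N) (Fin N) ℝ)
    (hsymm : W.IsSymm) (hnonneg : ∀ i j, 0 ≤ W i j) (hdeg : ∀ i, 0 < deg W i)
    (f : Fin N → Fin n) (hsurj : Function.Surjective f)
    (hsame : ∀ i j, f i = f j → ∀ k, W i k / deg W i = W j k / deg W j)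
    (μ μl : Fin N → ℝ)
    (hμ : sortedEigs (normLap W) μ)
    (hμl : sortedEigs (normLap (liftG f W)) μl) :
    μ = μl ∧ ∑ i, |μ i - μl i| = 0 := by
  have hdl : ∀ i, 0 ≤ deg (liftG f W) i := by
    intro i
    rw [deg_lift W f hdeg hsurj hsame i]
    exact le_of_lt (div_pos (Dp_pos W f hdeg i) (partSize_pos f hsurj (f i)))
  have h3 : (rwMat W).charpoly = (rwMat (liftG f W)).charpoly := by
    rw [rw_lift W f hdeg hsurj hsame, ← my_charpoly_mul_comm,
      avg_rw W f hdeg hsurj hsame]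
  have hmain : (normLap W).charpoly = (normLap (liftG f W)).charpoly := by
    rw [normLap_charpoly_aux W (fun i => le_of_lt (hdeg i)),
      normLap_charpoly_aux (liftG f W) hdl]
    exact my_charpoly_one_sub _ _ h3
  have heq : μ = μl := by
    apply monotone_eq_of_prod_eq μ μl hμ.1 hμl.1
    rw [← hμ.2, ← hμl.2, hmain]
  refine ⟨heq, ?_⟩
  rw [heq]
  simp
end
end

section
/- Let W ∈ ℝ^{N×N} be a symmetric matrix with nonnegative entries and positive degrees, and suppose there is a partition of {1,…,N} into n nonempty sets such that w(i)/d(i) = w(j)/d(j) whenever i, j lie in the same part (w(i) the i-th row of W, d(i) its row sum). Then the matrix D^{-1} W has rank at most n; consequently the random-walk Laplacian I_N − D^{-1} W (and hence the normalized Laplacian) has eigenvalue 1 with multiplicity at least N − n. -/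
open Matrix BigOperators

noncomputable section

section Aux

open Polynomial

/-- Evaluating the characteristic polynomial at `t` gives `det (t·I - A)`. -/
lemma eval_charpoly_aux {N : ℕ} (A : Matrix (Fin N) (Fin N) ℝ) (t : ℝ) :
    A.charpoly.eval t = (Matrix.diagonal (fun _ : Fin N => t) - A).det := by
  rw [Matrix.charpoly, ← Polynomial.coe_evalRingHom, RingHom.map_det]
  congr 1
  ext i j
  rcases eq_or_ne i j with rfl | h
  · simp [Matrix.charmatrix_apply_eq]
  · simp [Matrix.charmatrix_apply_ne _ _ _ h, Matrix.diagonal_apply_ne _ h]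

/-- Conjugation invariance of the characteristic polynomial. -/
lemma charpoly_conj_aux {N : ℕ} (S A : Matrix (Fin N) (Fin N) ℝ) (hS : IsUnit S.det) :
    (S * A * S⁻¹).charpoly = A.charpoly := by
  apply Polynomial.funext
  intro t
  rw [eval_charpoly_aux, eval_charpoly_aux]
  have hd : S * Matrix.diagonal (fun _ : Fin N => t) * S⁻¹
      = Matrix.diagonal (fun _ : Fin N => t) := by
    have hc : S * Matrix.diagonal (fun _ : Fin N => t)
        = Matrix.diagonal (fun _ : Fin N => t) * S := by
      ext i j
      simp [Matrix.mul_diagonal, Matrix.diagonal_mul, mul_comm]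
    rw [hc, Matrix.mul_assoc, Matrix.mul_nonsing_inv _ hS, Matrix.mul_one]
  have h1 : Matrix.diagonal (fun _ : Fin N => t) - S * A * S⁻¹
      = S * (Matrix.diagonal (fun _ : Fin N => t) - A) * S⁻¹ := by
    rw [Matrix.mul_sub, Matrix.sub_mul, hd]
  rw [h1, Matrix.det_mul_comm (S * (Matrix.diagonal (fun _ : Fin N => t) - A)) S⁻¹,
    ← Matrix.mul_assoc, Matrix.nonsing_inv_mul _ hS, Matrix.one_mul]

/-- Shifting: the charpoly of `1 - M` composed with `X + 1` is the charpoly of `-M`. -/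
lemma charpoly_shift_aux {N : ℕ} (M : Matrix (Fin N) (Fin N) ℝ) :
    ((1 - M).charpoly).comp (X + C 1) = (-M).charpoly := by
  apply Polynomial.funext
  intro t
  rw [Polynomial.eval_comp]
  simp only [Polynomial.eval_add, Polynomial.eval_X, Polynomial.eval_C]
  rw [eval_charpoly_aux, eval_charpoly_aux]
  congr 1
  ext i j
  rcases eq_or_ne i j with rfl | h
  · simp only [Matrix.sub_apply, Matrix.neg_apply, Matrix.diagonal_apply_eq,
      Matrix.one_apply_eq]
    ring
  · simp [Matrix.diagonal_apply_ne _ h, Matrix.one_apply_ne h]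

/-- The charpoly of `mulVecLin A` equals the charpoly of `A`. -/
lemma charpoly_mulVecLin_aux {N : ℕ} (A : Matrix (Fin N) (Fin N) ℝ) :
    LinearMap.charpoly (A.mulVecLin : Module.End ℝ (Fin N → ℝ)) = A.charpoly := by
  rw [← LinearMap.charpoly_toMatrix (A.mulVecLin) (Pi.basisFun ℝ (Fin N)),
    LinearMap.toMatrix_eq_toMatrix', ← Matrix.toLin'_apply', LinearMap.toMatrix'_toLin']

end Aux


/-- The random-walk matrix factors through `Fin n`, hence has rank at most `n`. -/
lemma rank_rwMat_le {N n : ℕ} (W : Matrix (Fin N) (Fin N) ℝ)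
    (f : Fin N → Fin n) (hsurj : Function.Surjective f)
    (hsame : ∀ i j, f i = f j → ∀ k, W i k / deg W i = W j k / deg W j) :
    (rwMat W).rank ≤ n := by
  have hfac : rwMat W = (Matrix.of fun i p => if f i = p then (1 : ℝ) else 0) *
      (Matrix.of fun (p : Fin n) k => rwMat W (Function.surjInv hsurj p) k) := by
    ext i k
    rw [Matrix.mul_apply]
    have hsum : ∑ p : Fin n, (if f i = p then (1 : ℝ) else 0) *
        rwMat W (Function.surjInv hsurj p) k
        = rwMat W (Function.surjInv hsurj (f i)) k := by
      rw [Finset.sum_eq_single (f i)]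
      · simp
      · intro p _ hp
        simp [Ne.symm hp]
      · simp
    simp only [Matrix.of_apply]
    rw [hsum]
    have hfi : f (Function.surjInv hsurj (f i)) = f i := Function.surjInv_eq hsurj (f i)
    have hM : ∀ (j k : Fin N), rwMat W j k = W j k / deg W j := by
      intro j k
      simp [rwMat, Matrix.diagonal_mul, div_eq_inv_mul]
    rw [hM, hM, hsame _ i hfi k]
  rw [hfac]
  exact (Matrix.rank_mul_le_right _ _).trans
    ((Matrix.rank_le_card_height _).trans (by simp))

/-- **Rank bound and multiplicity of eigenvalue 1.**
If nodes in the same part have equal normalized edge-weight vectors, then `D^{-1} W`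
has rank at most `n`, and the random-walk Laplacian `I - D^{-1} W` (hence also the
normalized Laplacian) has eigenvalue `1` with multiplicity at least `N - n`. -/
theorem rank_and_eigenvalue_one {N n : ℕ} (W : Matrix (Fin N) (Fin N) ℝ)
    (hsymm : W.IsSymm) (hnonneg : ∀ i j, 0 ≤ W i j) (hdeg : ∀ i, 0 < deg W i)
    (f : Fin N → Fin n) (hsurj : Function.Surjective f)
    (hsame : ∀ i j, f i = f j → ∀ k, W i k / deg W i = W j k / deg W j) :
    (rwMat W).rank ≤ n ∧
    N - n ≤ ((1 - rwMat W).charpoly).rootMultiplicity 1 ∧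
    N - n ≤ ((normLap W).charpoly).rootMultiplicity 1 := by
  constructor
  · exact rank_rwMat_le W f hsurj hsame
  · -- multiplicity bounds
    have hrank : (rwMat W).rank ≤ n := rank_rwMat_le W f hsurj hsame
    -- kernel dimension of rwMat is at least N - n
    set M := rwMat W with hMdef
    have hkerdim : N - n ≤ Module.finrank ℝ (LinearMap.ker M.mulVecLin) := by
      have h1 : Module.finrank ℝ (LinearMap.range M.mulVecLin)
          + Module.finrank ℝ (LinearMap.ker M.mulVecLin)
          = Module.finrank ℝ (Fin N → ℝ) := LinearMap.finrank_range_add_finrank_ker _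
      have h2 : Module.finrank ℝ (Fin N → ℝ) = N := by simp
      have h3 : M.rank = Module.finrank ℝ (LinearMap.range M.mulVecLin) := rfl
      omega
    -- the kernel sits inside the generalized 0-eigenspace of `mulVecLin (-M)`
    have hsub : LinearMap.ker M.mulVecLin ≤
        Module.End.maxGenEigenspace ((-M).mulVecLin : Module.End ℝ (Fin N → ℝ)) 0 := by
      intro x hx
      rw [Module.End.mem_maxGenEigenspace]
      refine ⟨1, ?_⟩
      have hx' : M.mulVec x = 0 := LinearMap.mem_ker.mp hx
      simp [pow_one, Matrix.mulVecLin_apply, Matrix.neg_mulVec, hx']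
    have hmle : N - n ≤ Module.finrank ℝ
        (Module.End.maxGenEigenspace ((-M).mulVecLin : Module.End ℝ (Fin N → ℝ)) 0) :=
      le_trans hkerdim (Submodule.finrank_mono hsub)
    have hmult : N - n ≤ ((1 - M).charpoly).rootMultiplicity 1 := by
      rw [Polynomial.rootMultiplicity_eq_natTrailingDegree]
      have := LinearMap.finrank_maxGenEigenspace_zero_eq
        ((-M).mulVecLin : Module.End ℝ (Fin N → ℝ))
      rw [this] at hmle
      rwa [charpoly_mulVecLin_aux, ← charpoly_shift_aux] at hmle
    refine ⟨hmult, ?_⟩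
    -- normLap is conjugate to 1 - rwMat
    have hsq : ∀ i, (0 : ℝ) < Real.sqrt (deg W i) := fun i => Real.sqrt_pos.mpr (hdeg i)
    set S : Matrix (Fin N) (Fin N) ℝ := Matrix.diagonal (fun i => Real.sqrt (deg W i)) with hS
    have hdetS : IsUnit S.det := by
      rw [hS, Matrix.det_diagonal]
      exact isUnit_iff_ne_zero.mpr (Finset.prod_ne_zero_iff.mpr fun i _ => (hsq i).ne')
    have hSinv : S⁻¹ = invSqrtDeg W := by
      apply Matrix.inv_eq_right_inv
      rw [hS, invSqrtDeg, Matrix.diagonal_mul_diagonal,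
        show (fun i => Real.sqrt (deg W i) * (Real.sqrt (deg W i))⁻¹)
          = fun _ : Fin N => (1 : ℝ) from funext fun i => mul_inv_cancel₀ (hsq i).ne',
        Matrix.diagonal_one]
    have hconj : normLap W = S * (1 - M) * S⁻¹ := by
      rw [Matrix.mul_sub, Matrix.mul_one, Matrix.sub_mul, Matrix.mul_nonsing_inv _ hdetS]
      rw [hSinv]
      have hSd : S * Matrix.diagonal (fun i => (deg W i)⁻¹) = invSqrtDeg W := by
        have hfun : (fun i => Real.sqrt (deg W i) * (deg W i)⁻¹)
            = fun i => (Real.sqrt (deg W i))⁻¹ := by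
          funext i
          have hdne : deg W i ≠ 0 := (hdeg i).ne'
          have hsne : Real.sqrt (deg W i) ≠ 0 := (hsq i).ne'
          field_simp
          exact Real.sq_sqrt (hdeg i).le
        rw [hS, invSqrtDeg, Matrix.diagonal_mul_diagonal, hfun]
      have : S * (M * invSqrtDeg W) = invSqrtDeg W * W * invSqrtDeg W := by
        rw [hMdef, rwMat, ← Matrix.mul_assoc, ← Matrix.mul_assoc, hSd]
      rw [Matrix.mul_assoc S M (invSqrtDeg W), this, normLap]
    rw [hconj, charpoly_conj_aux _ _ hdetS]
    exact hmult
end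
end

section
/- Let C ∈ ℝ^{n×N} satisfy C Cᵀ = I_n, let U_k ∈ ℝ^{N×k} have orthonormal columns with k ≤ n, and set Π = CᵀC and δ = ‖(I_N − Π) U_k‖_F². Let Z = C U_k ∈ ℝ^{n×k}. Then the smallest eigenvalue of Zᵀ Z is at least 1 − δ; in particular, if δ < 1 then Zᵀ Z is invertible and ‖(Zᵀ Z)^{-1}‖₂ ≤ 1/(1 − δ). -/
open Matrix BigOperators

noncomputable section

lemma gram_quad_le {a b : ℕ} (M : Matrix (Fin a) (Fin b) ℝ) (w : Fin b → ℝ) :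
    w ⬝ᵥ (Mᵀ * M) *ᵥ w ≤ frobSq M * ∑ i, w i ^ 2 := by
  have h1 : w ⬝ᵥ (Mᵀ * M) *ᵥ w = ∑ j, ((M *ᵥ w) j) ^ 2 := by
    rw [← Matrix.mulVec_mulVec, Matrix.dotProduct_mulVec, Matrix.vecMul_transpose]
    simp [dotProduct, sq]
  rw [h1, frobSq, Finset.sum_mul]
  apply Finset.sum_le_sum
  intro j _
  have := Finset.sum_mul_sq_le_sq_mul_sq Finset.univ (fun i => M j i) w
  simpa [Matrix.mulVec, dotProduct] using this


/-- **Lower bound for the Gram matrix `ZᵀZ` with `Z = C U`.**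
If `C Cᵀ = I_n`, `U` has orthonormal columns and `δ = ‖(I - CᵀC)U‖_F²`, then every
eigenvalue of `ZᵀZ` is at least `1 - δ`; if moreover `δ < 1`, then `ZᵀZ` is
invertible with `‖(ZᵀZ)⁻¹‖₂ ≤ 1/(1 - δ)`. -/
theorem gram_matrix_bound {N n k : ℕ} (hk : k ≤ n)
    (C : Matrix (Fin n) (Fin N) ℝ) (hC : C * Cᵀ = 1)
    (U : Matrix (Fin N) (Fin k) ℝ) (hU : Uᵀ * U = 1)
    (δ : ℝ) (hδ : δ = frobSq ((1 - Cᵀ * C) * U)) :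
    (∀ (σ : ℝ) (v : Fin k → ℝ), v ≠ 0 →
        ((C * U)ᵀ * (C * U)).mulVec v = σ • v → 1 - δ ≤ σ) ∧
    (δ < 1 →
      IsUnit ((C * U)ᵀ * (C * U)) ∧
      ∀ x : Fin k → ℝ,
        Real.sqrt (∑ i, ((((C * U)ᵀ * (C * U))⁻¹).mulVec x i) ^ 2)
          ≤ (1 / (1 - δ)) * Real.sqrt (∑ i, (x i) ^ 2)) := by
  set M : Matrix (Fin N) (Fin k) ℝ := (1 - Cᵀ * C) * U with hM
  set A : Matrix (Fin k) (Fin k) ℝ := (C * U)ᵀ * (C * U) with hAdef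
  -- projection property
  have h1 : Cᵀ * C * (Cᵀ * C) = Cᵀ * C := by
    calc Cᵀ * C * (Cᵀ * C) = Cᵀ * (C * Cᵀ) * C := by
          simp only [Matrix.mul_assoc]
      _ = Cᵀ * C := by rw [hC, Matrix.mul_one]
  have hproj : (1 - Cᵀ * C) * (1 - Cᵀ * C) = 1 - Cᵀ * C := by
    rw [Matrix.sub_mul, Matrix.one_mul, Matrix.mul_sub, Matrix.mul_one, h1]
    abel
  have hA : A = 1 - Mᵀ * M := by
    have hMt : Mᵀ = Uᵀ * (1 - Cᵀ * C) := by
      rw [hM, Matrix.transpose_mul, Matrix.transpose_sub, Matrix.transpose_one,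
        Matrix.transpose_mul, Matrix.transpose_transpose]
    rw [hAdef, hMt, hM]
    calc (C * U)ᵀ * (C * U)
        = Uᵀ * (Cᵀ * C) * U := by
          rw [Matrix.transpose_mul]; simp only [Matrix.mul_assoc]
      _ = Uᵀ * U - Uᵀ * (1 - Cᵀ * C) * U := by
          rw [Matrix.mul_sub, Matrix.mul_one, Matrix.sub_mul]; abel
      _ = 1 - Uᵀ * (1 - Cᵀ * C) * U := by rw [hU]
      _ = 1 - Uᵀ * (1 - Cᵀ * C) * ((1 - Cᵀ * C) * U) := by
          have hproj' : (1 - Cᵀ * C) * ((1 - Cᵀ * C) * U) = (1 - Cᵀ * C) * U := by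
            rw [← Matrix.mul_assoc, hproj]
          congr 1
          rw [Matrix.mul_assoc, Matrix.mul_assoc, hproj']
  -- key quadratic bound
  have hkey : ∀ w : Fin k → ℝ, (1 - δ) * ∑ i, w i ^ 2 ≤ w ⬝ᵥ A *ᵥ w := by
    intro w
    have h2 : w ⬝ᵥ A *ᵥ w = (∑ i, w i ^ 2) - w ⬝ᵥ (Mᵀ * M) *ᵥ w := by
      rw [hA, Matrix.sub_mulVec, Matrix.one_mulVec, dotProduct_sub]
      congr 1
      simp [dotProduct, sq]
    rw [h2]
    have := gram_quad_le M w
    rw [← hδ] at this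
    nlinarith [this]
  have part1 : ∀ (σ : ℝ) (v : Fin k → ℝ), v ≠ 0 →
      A.mulVec v = σ • v → 1 - δ ≤ σ := by
    intro σ v hv h
    have hpos : 0 < ∑ i, v i ^ 2 := by
      rcases Function.ne_iff.mp hv with ⟨i, hi⟩
      simp only [Pi.zero_apply] at hi
      have : 0 < v i ^ 2 := by
        have := sq_abs (v i)
        nlinarith [abs_pos.mpr hi]
      exact this.trans_le (Finset.single_le_sum (fun j _ => sq_nonneg (v j))
        (Finset.mem_univ i))
    have hq : v ⬝ᵥ A *ᵥ v = σ * ∑ i, v i ^ 2 := by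
      rw [h, dotProduct_smul]
      simp [dotProduct, sq, Finset.mul_sum]
    have := hkey v
    rw [hq] at this
    exact le_of_mul_le_mul_right (by linarith) hpos
  refine ⟨part1, fun hδ1 => ?_⟩
  have hdet : A.det ≠ 0 := by
    intro h0
    obtain ⟨v, hv, hAv⟩ := Matrix.exists_mulVec_eq_zero_iff.mpr h0
    have : (1 : ℝ) - δ ≤ 0 := part1 0 v hv (by simpa using hAv)
    linarith
  have hunit : IsUnit A := by
    rw [Matrix.isUnit_iff_isUnit_det]
    exact isUnit_iff_ne_zero.mpr hdet
  refine ⟨hunit, fun x => ?_⟩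
  set y : Fin k → ℝ := A⁻¹ *ᵥ x with hy
  have hAy : A *ᵥ y = x := by
    rw [hy, Matrix.mulVec_mulVec, Matrix.mul_nonsing_inv _ (isUnit_iff_ne_zero.mpr hdet), Matrix.one_mulVec]
  set a := Real.sqrt (∑ i, y i ^ 2) with ha
  set b := Real.sqrt (∑ i, x i ^ 2) with hb
  have ha2 : a ^ 2 = ∑ i, y i ^ 2 := Real.sq_sqrt (by positivity)
  have hb2 : b ^ 2 = ∑ i, x i ^ 2 := Real.sq_sqrt (by positivity)
  have hanon : 0 ≤ a := Real.sqrt_nonneg _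
  have hbnon : 0 ≤ b := Real.sqrt_nonneg _
  -- (1-δ) a² ≤ y ⬝ x ≤ a b
  have hq1 : (1 - δ) * a ^ 2 ≤ y ⬝ᵥ x := by
    rw [ha2, ← hAy]; exact hkey y
  have hcs : y ⬝ᵥ x ≤ a * b := by
    have h := Finset.sum_mul_sq_le_sq_mul_sq Finset.univ y x
    have : (y ⬝ᵥ x) ^ 2 ≤ (a * b) ^ 2 := by
      rw [mul_pow, ha2, hb2]; simpa [dotProduct] using h
    calc y ⬝ᵥ x ≤ |y ⬝ᵥ x| := le_abs_self _
      _ = Real.sqrt ((y ⬝ᵥ x) ^ 2) := (Real.sqrt_sq_eq_abs _).symm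
      _ ≤ Real.sqrt ((a * b) ^ 2) := Real.sqrt_le_sqrt this
      _ = a * b := Real.sqrt_sq (by positivity)
  have hmain : (1 - δ) * a ^ 2 ≤ a * b := le_trans hq1 hcs
  show a ≤ (1 / (1 - δ)) * b
  have hd : (0:ℝ) < 1 - δ := by linarith
  rcases eq_or_lt_of_le hanon with h0 | hpos
  · rw [← h0]; positivity
  · rw [div_mul_eq_mul_div, one_mul, le_div_iff₀ hd]
    nlinarith [hmain, hpos]
end
end

section
/- Let A ∈ ℝ^{N×N} be symmetric positive semidefinite with largest eigenvalue at most 2, let C ∈ ℝ^{n×N} satisfy C Cᵀ = I_n, and let k ≤ n. Let U_k ∈ ℝ^{N×k} be a matrix whose columns are orthonormal eigenvectors of A corresponding to its k smallest eigenvalues λ(1) ≤ … ≤ λ(k), and set δ = ‖(I_N − CᵀC) U_k‖_F². If δ < 1, then the k smallest eigenvalues λ_c(1) ≤ … ≤ λ_c(k) of the symmetric matrix C A Cᵀ ∈ ℝ^{n×n} satisfy Σ_{i=1}^k λ_c(i) ≤ (√(Σ_{i=1}^k λ(i)) + √(2δ))² / (1 − δ). -/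
open Matrix BigOperators

noncomputable section

set_option maxHeartbeats 1000000

namespace Aux
open Polynomial

lemma dot_self_mulVec {m k : ℕ} (M : Matrix (Fin m) (Fin k) ℝ) (x : Fin m → ℝ) :
    (Mᵀ *ᵥ x) ⬝ᵥ (Mᵀ *ᵥ x) = x ⬝ᵥ ((M * Mᵀ) *ᵥ x) := by
  rw [Matrix.dotProduct_mulVec, Matrix.vecMul_transpose, Matrix.mulVec_mulVec,
    dotProduct_comm]

lemma dot_self_nonneg {m : ℕ} (v : Fin m → ℝ) : 0 ≤ v ⬝ᵥ v :=
  Finset.sum_nonneg fun i _ => mul_self_nonneg _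

lemma proj_quad_nonneg {m : ℕ} {P : Matrix (Fin m) (Fin m) ℝ} (hs : Pᵀ = P)
    (hi : P * P = P) (x : Fin m → ℝ) : 0 ≤ x ⬝ᵥ (P *ᵥ x) := by
  have : P = P * Pᵀ := by rw [hs, hi]
  calc (0:ℝ) ≤ (Pᵀ *ᵥ x) ⬝ᵥ (Pᵀ *ᵥ x) := dot_self_nonneg _
  _ = x ⬝ᵥ ((P * Pᵀ) *ᵥ x) := dot_self_mulVec P x
  _ = x ⬝ᵥ (P *ᵥ x) := by rw [← this]

lemma proj_quad_le {m : ℕ} {P : Matrix (Fin m) (Fin m) ℝ} (hs : Pᵀ = P)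
    (hi : P * P = P) (x : Fin m → ℝ) : x ⬝ᵥ (P *ᵥ x) ≤ x ⬝ᵥ x := by
  have h1 : (1 - P)ᵀ = 1 - P := by rw [Matrix.transpose_sub, Matrix.transpose_one, hs]
  have h2 : (1 - P) * (1 - P) = 1 - P := by
    simp [Matrix.sub_mul, Matrix.mul_sub, hi]
  have := proj_quad_nonneg h1 h2 x
  rw [Matrix.sub_mulVec, dotProduct_sub, Matrix.one_mulVec] at this
  linarith

lemma frobSq_eq_trace {a b : ℕ} (M : Matrix (Fin a) (Fin b) ℝ) :
    frobSq M = Matrix.trace (Mᵀ * M) := by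
  rw [Matrix.trace, frobSq, Finset.sum_comm]
  simp [Matrix.mul_apply, Matrix.diag, sq]

lemma frobSq_nonneg {a b : ℕ} (M : Matrix (Fin a) (Fin b) ℝ) : 0 ≤ frobSq M :=
  Finset.sum_nonneg fun i _ => Finset.sum_nonneg fun j _ => sq_nonneg _

lemma quad_le_frobSq {a b : ℕ} (F : Matrix (Fin a) (Fin b) ℝ) (x : Fin b → ℝ) :
    (F *ᵥ x) ⬝ᵥ (F *ᵥ x) ≤ frobSq F * (x ⬝ᵥ x) := by
  rw [frobSq, Finset.sum_mul]
  apply Finset.sum_le_sum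
  intro i _
  have := Finset.sum_mul_sq_le_sq_mul_sq Finset.univ (fun j => F i j) x
  calc (F *ᵥ x) i * (F *ᵥ x) i = (∑ j, F i j * x j) ^ 2 := by
        rw [sq]; rfl
  _ ≤ (∑ j, F i j ^ 2) * ∑ j, x j ^ 2 := this
  _ = (∑ j, F i j ^ 2) * (x ⬝ᵥ x) := by
        congr 1; simp [dotProduct, sq]

lemma trace_conj_le {a b : ℕ} (A : Matrix (Fin a) (Fin a) ℝ) (F : Matrix (Fin a) (Fin b) ℝ)
    (c : ℝ) (hA : ∀ x, x ⬝ᵥ (A *ᵥ x) ≤ c * (x ⬝ᵥ x)) :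
    Matrix.trace (Fᵀ * A * F) ≤ c * Matrix.trace (Fᵀ * F) := by
  rw [Matrix.trace, Matrix.trace, Finset.mul_sum]
  apply Finset.sum_le_sum
  intro i _
  have h := hA (fun r => F r i)
  have e1 : Matrix.diag (Fᵀ * A * F) i = (fun r => F r i) ⬝ᵥ (A *ᵥ fun r => F r i) := by
    simp only [Matrix.diag, Matrix.mul_apply, Matrix.transpose_apply, Matrix.mulVec,
      dotProduct, Finset.sum_mul, Finset.mul_sum]
    rw [Finset.sum_comm]
    exact Finset.sum_congr rfl fun r _ => Finset.sum_congr rfl fun s _ => by ring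
  have e2 : Matrix.diag (Fᵀ * F) i = (fun r => F r i) ⬝ᵥ (fun r => F r i) := by
    simp [Matrix.diag, Matrix.mul_apply, dotProduct]
  rw [e1, e2]; exact h

lemma trace_conj_nonneg {a b : ℕ} (A : Matrix (Fin a) (Fin a) ℝ) (F : Matrix (Fin a) (Fin b) ℝ)
    (hA : ∀ x, 0 ≤ x ⬝ᵥ (A *ᵥ x)) : 0 ≤ Matrix.trace (Fᵀ * A * F) := by
  rw [Matrix.trace]
  apply Finset.sum_nonneg
  intro i _
  have h := hA (fun r => F r i)
  have e1 : Matrix.diag (Fᵀ * A * F) i = (fun r => F r i) ⬝ᵥ (A *ᵥ fun r => F r i) := by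
    simp only [Matrix.diag, Matrix.mul_apply, Matrix.transpose_apply, Matrix.mulVec,
      dotProduct, Finset.sum_mul, Finset.mul_sum]
    rw [Finset.sum_comm]
    exact Finset.sum_congr rfl fun r _ => Finset.sum_congr rfl fun s _ => by ring
  rw [e1]; exact h


lemma charpoly_conj_orth {m : ℕ} (Q D : Matrix (Fin m) (Fin m) ℝ) (hQ : Q * Qᵀ = 1) :
    (Q * D * Qᵀ).charpoly = D.charpoly := by
  let Qc := Q.map (C : ℝ →+* ℝ[X])
  have hQc : Qc * (Qᵀ).map (C : ℝ →+* ℝ[X]) = 1 := by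
    rw [← Matrix.map_mul, hQ, Matrix.map_one _ (map_zero C) (map_one C)]
  have hchar : charmatrix (Q * D * Qᵀ) = Qc * charmatrix D * (Qᵀ).map (C : ℝ →+* ℝ[X]) := by
    unfold charmatrix
    rw [Matrix.mul_sub, Matrix.sub_mul]
    congr 1
    · have hc : Qc * Matrix.scalar (Fin m) (X : ℝ[X]) = Matrix.scalar (Fin m) (X : ℝ[X]) * Qc :=
        (Matrix.scalar_commute (X : ℝ[X]) (fun r => Commute.all _ r) Qc).symm
      rw [hc, Matrix.mul_assoc, hQc, Matrix.mul_one]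
    · simp only [RingHom.mapMatrix_apply, Qc]
      rw [← Matrix.map_mul, ← Matrix.map_mul]
  unfold Matrix.charpoly
  rw [hchar, Matrix.det_mul, Matrix.det_mul]
  have h1 : Qc.det * ((Qᵀ).map (C : ℝ →+* ℝ[X])).det = 1 := by
    rw [← Matrix.det_mul, hQc, Matrix.det_one]
  calc Qc.det * (charmatrix D).det * ((Qᵀ).map (C : ℝ →+* ℝ[X])).det
      = (charmatrix D).det * (Qc.det * ((Qᵀ).map (C : ℝ →+* ℝ[X])).det) := by ring
    _ = (charmatrix D).det := by rw [h1, mul_one]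

lemma charpoly_diag {m : ℕ} (ν : Fin m → ℝ) :
    (Matrix.diagonal ν).charpoly = ∏ i, (X - C (ν i)) := by
  have h : charmatrix (Matrix.diagonal ν) = Matrix.diagonal fun i => (X : ℝ[X]) - C (ν i) := by
    ext i j
    by_cases h : i = j
    · subst h; simp
    · rw [charmatrix_apply_ne _ _ _ h, Matrix.diagonal_apply_ne _ h, Matrix.diagonal_apply_ne _ h]
      simp
  rw [Matrix.charpoly, h, Matrix.det_diagonal]

lemma exists_perm_eq {m : ℕ} (f g : Fin m → ℝ) (hg : Monotone g)
    (h : (∏ i, (X - C (g i)) : ℝ[X]) = ∏ i, (X - C (f i))) :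
    ∃ σ : Equiv.Perm (Fin m), g = f ∘ σ := by
  have hms : (Multiset.map g Finset.univ.val) = Multiset.map f Finset.univ.val := by
    have hg' : (Multiset.map g Finset.univ.val).map (fun a : ℝ => X - C a)
        = Finset.univ.val.map (fun i => (X : ℝ[X]) - C (g i)) := Multiset.map_map _ _ _
    have hf' : (Multiset.map f Finset.univ.val).map (fun a : ℝ => X - C a)
        = Finset.univ.val.map (fun i => (X : ℝ[X]) - C (f i)) := Multiset.map_map _ _ _
    have := congrArg Polynomial.roots h
    rwa [Finset.prod, Finset.prod, ← hg', ← hf', roots_multiset_prod_X_sub_C,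
      roots_multiset_prod_X_sub_C] at this
  rw [Fin.univ_val_map, Fin.univ_val_map, Multiset.coe_eq_coe] at hms
  refine ⟨Tuple.sort f, ?_⟩
  have hperm : (List.ofFn g).Perm (List.ofFn (f ∘ Tuple.sort f)) :=
    hms.trans ((Tuple.sort f).ofFn_comp_perm f).symm
  have hsg : (List.ofFn g).Pairwise (· ≤ ·) :=
    List.pairwise_ofFn.2 fun i j hij => hg hij.le
  have hsf : (List.ofFn (f ∘ Tuple.sort f)).Pairwise (· ≤ ·) :=
    List.pairwise_ofFn.2 fun i j hij => (Tuple.monotone_sort f) hij.le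
  exact List.ofFn_injective (List.Perm.eq_of_pairwise' hsg hsf hperm)


lemma real_spectral {m : ℕ} (M : Matrix (Fin m) (Fin m) ℝ) (hM : M.IsHermitian) :
    ∃ Q : Matrix (Fin m) (Fin m) ℝ, Q * Qᵀ = 1 ∧ Qᵀ * Q = 1 ∧
      M = Q * Matrix.diagonal hM.eigenvalues * Qᵀ := by
  refine ⟨(hM.eigenvectorUnitary : Matrix (Fin m) (Fin m) ℝ), ?_, ?_, ?_⟩
  · have := (Matrix.mem_unitaryGroup_iff).mp hM.eigenvectorUnitary.2
    rwa [Matrix.star_eq_conjTranspose, Matrix.conjTranspose_eq_transpose_of_trivial] at this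
  · have := (Matrix.mem_unitaryGroup_iff').mp hM.eigenvectorUnitary.2
    rwa [Matrix.star_eq_conjTranspose, Matrix.conjTranspose_eq_transpose_of_trivial] at this
  · have h := hM.spectral_theorem
    rwa [Unitary.conjStarAlgAut_apply, Matrix.star_eq_conjTranspose, Matrix.conjTranspose_eq_transpose_of_trivial,
      RCLike.ofReal_real_eq_id, Function.id_comp] at h

lemma sum_head {m k : ℕ} (hk : k ≤ m) (g : Fin m → ℝ) :
    ∑ i : Fin k, g (Fin.castLE hk i) = ∑ j : Fin m, if (j : ℕ) < k then g j else 0 := by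
  rw [← Finset.sum_filter]
  refine Finset.sum_bij' (fun i _ => Fin.castLE hk i)
    (fun j hj => ⟨j.1, (Finset.mem_filter.mp hj).2⟩) ?_ ?_ ?_ ?_ ?_
  · intro i _
    simp [Fin.castLE, i.2]
  · intro j hj
    simp
  · intro i _
    rfl
  · intro j hj
    rfl
  · intro i _
    rfl

lemma sorted_dot {m k : ℕ} (hk : k ≤ m) (g : Fin m → ℝ) (hg : Monotone g) (u : Fin m → ℝ)
    (h0 : ∀ j, 0 ≤ u j) (h1 : ∀ j, u j ≤ 1) (hs : ∑ j, u j = k) :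
    ∑ i : Fin k, g (Fin.castLE hk i) ≤ ∑ j, g j * u j := by
  rcases Nat.eq_zero_or_pos m with hm | hm
  · subst hm
    have hk0 : k = 0 := Nat.le_zero.mp hk
    subst hk0
    simp
  set θ : ℝ := g ⟨min k (m - 1), by omega⟩ with hθ
  have hone : ∑ j : Fin m, (if (j : ℕ) < k then (1 : ℝ) else 0) = k := by
    rw [← sum_head hk (fun _ => (1 : ℝ))]
    simp
  have key : ∀ j : Fin m,
      (if (j : ℕ) < k then g j else 0) - g j * u j ≤ θ * ((if (j : ℕ) < k then (1:ℝ) else 0) - u j) := by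
    intro j
    by_cases hj : (j : ℕ) < k
    · simp only [hj, if_pos]
      have hgj : g j ≤ θ := by
        apply hg
        show (j : ℕ) ≤ min k (m - 1)
        omega
      have hu : 0 ≤ 1 - u j := by linarith [h1 j]
      nlinarith
    · simp only [hj, if_neg, not_false_iff]
      have hgj : θ ≤ g j := by
        apply hg
        show min k (m - 1) ≤ (j : ℕ)
        omega
      have := h0 j
      nlinarith
  have hsum := Finset.sum_le_sum (fun j (_ : j ∈ Finset.univ) => key j)
  rw [Finset.sum_sub_distrib] at hsum
  have hr : ∑ j : Fin m, θ * ((if (j : ℕ) < k then (1:ℝ) else 0) - u j) = 0 := by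
    rw [← Finset.mul_sum, Finset.sum_sub_distrib, hone, hs]
    simp
  rw [hr] at hsum
  rw [sum_head hk g]
  linarith


lemma psd_sqrt {m : ℕ} {T : Matrix (Fin m) (Fin m) ℝ} (hT : T.PosSemidef) :
    ∃ S : Matrix (Fin m) (Fin m) ℝ, S * S = T ∧ Sᵀ = S := by
  open scoped MatrixOrder in
  refine ⟨CFC.sqrt T, CFC.sqrt_mul_sqrt_self T hT.nonneg, ?_⟩
  open scoped MatrixOrder in
  have h := (CFC.sqrt_nonneg T).posSemidef.1
  rwa [Matrix.IsHermitian, Matrix.conjTranspose_eq_transpose_of_trivial] at h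

lemma trace_mul_le {m : ℕ} {T X : Matrix (Fin m) (Fin m) ℝ} (hT : T.PosSemidef) (c : ℝ)
    (hX : ∀ x, x ⬝ᵥ (X *ᵥ x) ≤ c * (x ⬝ᵥ x)) :
    Matrix.trace (T * X) ≤ c * Matrix.trace T := by
  obtain ⟨S, hS, hSt⟩ := psd_sqrt hT
  calc Matrix.trace (T * X) = Matrix.trace (S * (S * X)) := by rw [← Matrix.mul_assoc, hS]
    _ = Matrix.trace ((S * X) * S) := Matrix.trace_mul_comm _ _
    _ = Matrix.trace (Sᵀ * X * S) := by rw [hSt, Matrix.mul_assoc]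
    _ ≤ c * Matrix.trace (Sᵀ * S) := trace_conj_le X S c hX
    _ = c * Matrix.trace T := by rw [hSt, hS]

lemma kyFan {m k : ℕ} (hk : k ≤ m) (M : Matrix (Fin m) (Fin m) ℝ) (hM : M.IsHermitian)
    (μc : Fin m → ℝ) (hmono : Monotone μc)
    (hcp : M.charpoly = ∏ i, (X - C (μc i)))
    (V : Matrix (Fin m) (Fin k) ℝ) (hV : Vᵀ * V = 1) :
    ∑ i : Fin k, μc (Fin.castLE hk i) ≤ Matrix.trace (Vᵀ * M * V) := by
  obtain ⟨Q, hQQt, hQtQ, hdec⟩ := real_spectral M hM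
  set ν := hM.eigenvalues with hν
  have hcp2 : (∏ i, (X - C (μc i)) : ℝ[X]) = ∏ i, (X - C (ν i)) := by
    rw [← hcp, hdec, charpoly_conj_orth Q _ hQQt, charpoly_diag]
  obtain ⟨σ, hσ⟩ := exists_perm_eq ν μc hmono hcp2
  set R := Qᵀ * V with hR
  set t : Fin m → ℝ := fun a => ∑ i, R a i ^ 2 with ht
  have ht0 : ∀ a, 0 ≤ t a := fun a => Finset.sum_nonneg fun i _ => sq_nonneg _
  have ht1 : ∀ a, t a ≤ 1 := by
    intro a
    set q : Fin m → ℝ := fun b => Q b a with hq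
    have hw : (fun i => R a i) = Vᵀ *ᵥ q := by
      funext i
      simp only [hR, Matrix.mul_apply, Matrix.mulVec, dotProduct, Matrix.transpose_apply, hq]
      exact Finset.sum_congr rfl fun b _ => mul_comm _ _
    have h1 : t a = (Vᵀ *ᵥ q) ⬝ᵥ (Vᵀ *ᵥ q) := by
      rw [ht, ← hw]
      simp [dotProduct, sq]
    have h2 : (Vᵀ *ᵥ q) ⬝ᵥ (Vᵀ *ᵥ q) = q ⬝ᵥ ((V * Vᵀ) *ᵥ q) := dot_self_mulVec V q
    have hsym : (V * Vᵀ)ᵀ = V * Vᵀ := by rw [Matrix.transpose_mul, Matrix.transpose_transpose]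
    have hidem : (V * Vᵀ) * (V * Vᵀ) = V * Vᵀ := by
      rw [Matrix.mul_assoc, ← Matrix.mul_assoc Vᵀ V Vᵀ, hV, Matrix.one_mul]
    have h3 : q ⬝ᵥ ((V * Vᵀ) *ᵥ q) ≤ q ⬝ᵥ q := proj_quad_le hsym hidem q
    have h4 : q ⬝ᵥ q = 1 := by
      have : q ⬝ᵥ q = (Qᵀ * Q) a a := by
        simp [Matrix.mul_apply, dotProduct, hq]
      rw [this, hQtQ]
      simp
    rw [h1, h2] at *
    linarith
  have hsumt : ∑ a, t a = (k : ℝ) := by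
    have h1 : ∑ a, t a = Matrix.trace (Rᵀ * R) := by
      simp only [ht, Matrix.trace, Matrix.diag, Matrix.mul_apply, Matrix.transpose_apply, sq]
      exact Finset.sum_comm
    have h2 : Rᵀ * R = 1 := by
      rw [hR, Matrix.transpose_mul, Matrix.transpose_transpose, Matrix.mul_assoc,
        ← Matrix.mul_assoc Q Qᵀ V, hQQt, Matrix.one_mul, hV]
    rw [h1, h2, Matrix.trace_one]
    simp
  have htr : Matrix.trace (Vᵀ * M * V) = ∑ a, ν a * t a := by
    have hform : Vᵀ * M * V = Rᵀ * (Matrix.diagonal ν * R) := by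
      rw [hdec, hR, Matrix.transpose_mul, Matrix.transpose_transpose]
      simp only [Matrix.mul_assoc]
    rw [hform, Matrix.trace]
    have : ∀ i, Matrix.diag (Rᵀ * (Matrix.diagonal ν * R)) i = ∑ a, R a i * (ν a * R a i) := by
      intro i
      simp only [Matrix.diag, Matrix.mul_apply, Matrix.transpose_apply]
      refine Finset.sum_congr rfl fun a _ => ?_
      congr 1
      simp [Matrix.diagonal_apply, ite_mul, Finset.sum_ite_eq]
    rw [Finset.sum_congr rfl fun i _ => this i, Finset.sum_comm]
    exact Finset.sum_congr rfl fun a _ => by rw [ht, Finset.mul_sum]; exact Finset.sum_congr rfl fun i _ => by ring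
  have hperm : ∑ a, ν a * t a = ∑ j, μc j * (t ∘ σ) j := by
    rw [← Equiv.sum_comp σ (fun a => ν a * t a)]
    exact Finset.sum_congr rfl fun j _ => by rw [hσ]; rfl
  have hsumu : ∑ j, (t ∘ σ) j = (k : ℝ) := by
    exact (Equiv.sum_comp σ t).trans hsumt
  rw [htr, hperm]
  exact sorted_dot hk μc hmono (t ∘ σ) (fun j => ht0 _) (fun j => ht1 _) hsumu

lemma frobSq_sub_le {a b : ℕ} (X Y : Matrix (Fin a) (Fin b) ℝ) :
    frobSq (X - Y) ≤ (Real.sqrt (frobSq X) + Real.sqrt (frobSq Y)) ^ 2 := by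
  set ip : ℝ := ∑ i, ∑ j, X i j * Y i j with hip
  have hX : frobSq X = ∑ p : Fin a × Fin b, X p.1 p.2 ^ 2 := by
    rw [frobSq, Fintype.sum_prod_type]
  have hY : frobSq Y = ∑ p : Fin a × Fin b, Y p.1 p.2 ^ 2 := by
    rw [frobSq, Fintype.sum_prod_type]
  have hexp : frobSq (X - Y) = frobSq X - 2 * ip + frobSq Y := by
    calc frobSq (X - Y) = ∑ i, ∑ j, (X i j ^ 2 - 2 * (X i j * Y i j) + Y i j ^ 2) := by
          rw [frobSq]
          refine Finset.sum_congr rfl fun i _ => Finset.sum_congr rfl fun j _ => ?_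
          simp only [Matrix.sub_apply]; ring
      _ = frobSq X - 2 * ip + frobSq Y := by
          rw [frobSq, frobSq, hip]
          simp [Finset.sum_add_distrib, Finset.sum_sub_distrib, Finset.mul_sum]
  have hcs : ip ^ 2 ≤ frobSq X * frobSq Y := by
    rw [hX, hY, hip]
    have h : (∑ i, ∑ j, X i j * Y i j) = ∑ p : Fin a × Fin b, X p.1 p.2 * Y p.1 p.2 := by
      rw [Fintype.sum_prod_type]
    rw [h]
    exact Finset.sum_mul_sq_le_sq_mul_sq _ _ _
  have habs : |ip| ≤ Real.sqrt (frobSq X) * Real.sqrt (frobSq Y) := by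
    rw [← Real.sqrt_mul (frobSq_nonneg X)]
    rw [← Real.sqrt_sq_eq_abs]
    exact Real.sqrt_le_sqrt hcs
  have h1 := Real.sq_sqrt (frobSq_nonneg X)
  have h2 := Real.sq_sqrt (frobSq_nonneg Y)
  have := abs_le.mp habs
  nlinarith [this.1, this.2]

end Aux
open Aux

/-- **Courant–Fischer-type bound for the head eigenvalue sums.**
For symmetric PSD `A` with largest eigenvalue at most `2`, `C Cᵀ = I_n`, and `U_k`
the first `k` columns of an orthogonal eigenbasis of `A` sorted by nondecreasing
eigenvalue, if `δ = ‖(I - CᵀC) U_k‖_F² < 1` then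
`∑_{i≤k} λ_c(i) ≤ (√(∑_{i≤k} λ(i)) + √(2δ))² / (1 - δ)`. -/
theorem head_eigenvalue_sum_bound {N n k : ℕ} (hk : k ≤ n) (hnN : n ≤ N)
    (A : Matrix (Fin N) (Fin N) ℝ) (hA : A.PosSemidef)
    (hmax : ∀ (σ : ℝ) (v : Fin N → ℝ), v ≠ 0 → A.mulVec v = σ • v → σ ≤ 2)
    (C : Matrix (Fin n) (Fin N) ℝ) (hC : C * Cᵀ = 1)
    (μ : Fin N → ℝ) (U : Matrix (Fin N) (Fin N) ℝ)
    (hUorth : Uᵀ * U = 1) (hmono : Monotone μ)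
    (hdecomp : A = U * Matrix.diagonal μ * Uᵀ)
    (δ : ℝ)
    (hδ : δ = frobSq ((1 - Cᵀ * C) * U.submatrix id (Fin.castLE (hk.trans hnN))))
    (hδ1 : δ < 1)
    (μc : Fin n → ℝ) (hμc : sortedEigs (C * A * Cᵀ) μc) :
    ∑ i : Fin k, μc (Fin.castLE hk i) ≤
      (Real.sqrt (∑ i : Fin k, μ (Fin.castLE (hk.trans hnN) i)) + Real.sqrt (2 * δ)) ^ 2
        / (1 - δ) := by
  classical
  set c : Fin k → Fin N := Fin.castLE (hk.trans hnN) with hc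
  set Uk : Matrix (Fin N) (Fin k) ℝ := U.submatrix id c with hUk
  set P : Matrix (Fin N) (Fin N) ℝ := 1 - Cᵀ * C with hP
  set F : Matrix (Fin N) (Fin k) ℝ := P * Uk with hF
  set B : Matrix (Fin n) (Fin k) ℝ := C * Uk with hB
  set G : Matrix (Fin k) (Fin k) ℝ := Bᵀ * B with hG
  set M : Matrix (Fin n) (Fin n) ℝ := C * A * Cᵀ with hM
  have hδ0 : 0 ≤ δ := hδ ▸ frobSq_nonneg _
  have h1δ : (0:ℝ) < 1 - δ := by linarith
  have hAt : Aᵀ = A := by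
    have := hA.1
    rwa [Matrix.IsHermitian, Matrix.conjTranspose_eq_transpose_of_trivial] at this
  have hUUt : U * Uᵀ = 1 := mul_eq_one_comm.mp hUorth
  -- eigenvalue bounds
  have heig : ∀ j : Fin N, 0 ≤ μ j ∧ μ j ≤ 2 := by
    intro j
    set e : Fin N → ℝ := Pi.single j 1 with he
    set v : Fin N → ℝ := U *ᵥ e with hv
    have hDe : Matrix.diagonal μ *ᵥ e = μ j • e := by
      funext i
      simp only [Matrix.mulVec_diagonal, Pi.smul_apply, he, Pi.single_apply, smul_eq_mul]
      by_cases h : i = j <;> simp [h]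
    have hAv : A *ᵥ v = μ j • v := by
      rw [hv, hdecomp, Matrix.mulVec_mulVec,
        Matrix.mul_assoc (U * Matrix.diagonal μ) Uᵀ U, hUorth, Matrix.mul_one,
        ← Matrix.mulVec_mulVec, hDe, Matrix.mulVec_smul]
    have hvv : v ⬝ᵥ v = 1 := by
      have h1 : v ⬝ᵥ v = e ⬝ᵥ ((Uᵀ * (Uᵀ)ᵀ) *ᵥ e) := by
        have := dot_self_mulVec Uᵀ e
        rwa [Matrix.transpose_transpose, ← hv] at this
      rw [Matrix.transpose_transpose, hUorth, Matrix.one_mulVec] at h1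
      rw [h1, he]
      simp [dotProduct, Pi.single_apply]
    have hvne : v ≠ 0 := by
      intro h0
      rw [h0] at hvv
      simp [dotProduct] at hvv
    constructor
    · have := hA.dotProduct_mulVec_nonneg v
      rw [star_trivial, hAv, dotProduct_smul, smul_eq_mul, hvv, mul_one] at this
      exact this
    · exact hmax (μ j) v hvne hAv
  -- quadratic bound for A
  have quadA : ∀ x : Fin N → ℝ, x ⬝ᵥ (A *ᵥ x) ≤ 2 * (x ⬝ᵥ x) := by
    intro x
    set y : Fin N → ℝ := Uᵀ *ᵥ x with hy
    have h1 : x ⬝ᵥ (A *ᵥ x) = y ⬝ᵥ (Matrix.diagonal μ *ᵥ y) := by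
      have e1 : (U * Matrix.diagonal μ * Uᵀ) *ᵥ x = U *ᵥ (Matrix.diagonal μ *ᵥ (Uᵀ *ᵥ x)) := by
        rw [Matrix.mulVec_mulVec, Matrix.mulVec_mulVec]
      rw [hdecomp, e1, Matrix.dotProduct_mulVec x U, ← Matrix.mulVec_transpose]
    have h2 : y ⬝ᵥ (Matrix.diagonal μ *ᵥ y) ≤ 2 * (y ⬝ᵥ y) := by
      rw [dotProduct, dotProduct, Finset.mul_sum]
      apply Finset.sum_le_sum
      intro i _
      rw [Matrix.mulVec_diagonal]
      have h := (heig i).2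
      have h0 := (heig i).1
      nlinarith [mul_self_nonneg (y i)]
    have h3 : y ⬝ᵥ y = x ⬝ᵥ x := by
      have := dot_self_mulVec U x
      rw [← hy] at this
      rw [this, hUUt, Matrix.one_mulVec]
    rw [h1, ← h3]
    exact h2
  -- projection facts
  have hPt : Pᵀ = P := by
    rw [hP, Matrix.transpose_sub, Matrix.transpose_one, Matrix.transpose_mul,
      Matrix.transpose_transpose]
  have hCC : (Cᵀ * C) * (Cᵀ * C) = Cᵀ * C := by
    rw [Matrix.mul_assoc, ← Matrix.mul_assoc C Cᵀ C, hC, Matrix.one_mul]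
  have hPP : P * P = P := by
    rw [hP, Matrix.sub_mul, Matrix.mul_sub, Matrix.mul_sub, Matrix.one_mul, Matrix.mul_one, hCC]
    simp only [Matrix.one_mul]
    abel
  have hUkUk : Ukᵀ * Uk = 1 := by
    ext i j
    have h : (Uᵀ * U) (c i) (c j) = (1 : Matrix (Fin N) (Fin N) ℝ) (c i) (c j) := by
      rw [hUorth]
    simp only [Matrix.mul_apply, Matrix.transpose_apply, Matrix.one_apply] at h ⊢
    simp only [hUk, Matrix.submatrix_apply, id_eq]
    rw [h]
    have hinj := Fin.castLE_injective (hk.trans hnN)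
    by_cases hij : i = j
    · simp [hij]
    · have : c i ≠ c j := fun hcc => hij (hinj hcc)
      simp [hij, this]
  have hFtF : Fᵀ * F = Ukᵀ * (P * Uk) := by
    rw [hF, Matrix.transpose_mul, hPt, Matrix.mul_assoc, ← Matrix.mul_assoc P P Uk, hPP]
  have hδtr : δ = Matrix.trace (Fᵀ * F) := by rw [hδ, frobSq_eq_trace]
  have hCCP : Cᵀ * C = 1 - P := by rw [hP]; abel
  have hG1 : G = 1 - Fᵀ * F := by
    rw [hG, hB, Matrix.transpose_mul, Matrix.mul_assoc, ← Matrix.mul_assoc Cᵀ C Uk, hCCP,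
      Matrix.sub_mul, Matrix.one_mul, Matrix.mul_sub, hUkUk, ← hFtF]
  have hGquad : ∀ x : Fin k → ℝ, (1 - δ) * (x ⬝ᵥ x) ≤ x ⬝ᵥ (G *ᵥ x) := by
    intro x
    have h1 : x ⬝ᵥ ((Fᵀ * F) *ᵥ x) = (F *ᵥ x) ⬝ᵥ (F *ᵥ x) := by
      have h := dot_self_mulVec Fᵀ x
      rw [Matrix.transpose_transpose] at h
      exact h.symm
    have h2 := quad_le_frobSq F x
    rw [← hδ] at h2
    have h3 : x ⬝ᵥ (G *ᵥ x) = x ⬝ᵥ x - x ⬝ᵥ ((Fᵀ * F) *ᵥ x) := by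
      rw [hG1, Matrix.sub_mulVec, dotProduct_sub, Matrix.one_mulVec]
    rw [h3, h1]
    nlinarith [h2]
  have hGsym : Gᵀ = G := by rw [hG, Matrix.transpose_mul, Matrix.transpose_transpose]
  have hGpos : G.PosDef := by
    refine Matrix.PosDef.of_dotProduct_mulVec_pos ?_ ?_
    · rw [Matrix.IsHermitian, Matrix.conjTranspose_eq_transpose_of_trivial]
      exact hGsym
    · intro x hx
      rw [star_trivial]
      have hxx : 0 < x ⬝ᵥ x := by
        obtain ⟨i, hi⟩ := Function.ne_iff.mp hx
        apply Finset.sum_pos' (fun j _ => mul_self_nonneg _)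
        exact ⟨i, Finset.mem_univ i, mul_self_pos.mpr hi⟩
      calc (0:ℝ) < (1 - δ) * (x ⬝ᵥ x) := mul_pos h1δ hxx
        _ ≤ x ⬝ᵥ (G *ᵥ x) := hGquad x
  have hGdet : IsUnit G.det := isUnit_iff_ne_zero.mpr (ne_of_gt hGpos.det_pos)
  have hGGinv : G * G⁻¹ = 1 := Matrix.mul_nonsing_inv G hGdet
  have hGinvG : G⁻¹ * G = 1 := Matrix.nonsing_inv_mul G hGdet
  have hGinvpos : G⁻¹.PosDef := hGpos.inv
  have hGinvquad : ∀ x : Fin k → ℝ, x ⬝ᵥ (G⁻¹ *ᵥ x) ≤ (1 - δ)⁻¹ * (x ⬝ᵥ x) := by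
    intro x
    set y : Fin k → ℝ := G⁻¹ *ᵥ x with hy
    have hq0 : 0 ≤ x ⬝ᵥ y := by
      have h := hGinvpos.posSemidef.dotProduct_mulVec_nonneg x
      rwa [star_trivial, ← hy] at h
    have hxy : x = G *ᵥ y := by
      rw [hy, Matrix.mulVec_mulVec, hGGinv, Matrix.one_mulVec]
    have hq : x ⬝ᵥ y = y ⬝ᵥ (G *ᵥ y) := by
      conv_lhs => rw [hxy]
      exact dotProduct_comm _ _
    have h6 : (1 - δ) * (y ⬝ᵥ y) ≤ x ⬝ᵥ y := by rw [hq]; exact hGquad y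
    have hcs : (x ⬝ᵥ y) ^ 2 ≤ (x ⬝ᵥ x) * (y ⬝ᵥ y) := by
      have h := Finset.sum_mul_sq_le_sq_mul_sq Finset.univ x y
      have e2 : x ⬝ᵥ x = ∑ i, x i ^ 2 := by simp [dotProduct, sq]
      have e3 : y ⬝ᵥ y = ∑ i, y i ^ 2 := by simp [dotProduct, sq]
      rw [e2, e3]
      exact h
    have hxx0 : 0 ≤ x ⬝ᵥ x := dot_self_nonneg x
    have hyy0 : 0 ≤ y ⬝ᵥ y := dot_self_nonneg y
    rw [inv_mul_eq_div, le_div_iff₀ h1δ]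
    rcases eq_or_lt_of_le hq0 with hq|hq
    · rw [← hq]
      simpa using hxx0
    · have h7 : (x ⬝ᵥ y) * ((x ⬝ᵥ y) * (1 - δ)) ≤ (x ⬝ᵥ y) * (x ⬝ᵥ x) := by
        calc (x ⬝ᵥ y) * ((x ⬝ᵥ y) * (1 - δ)) = (x ⬝ᵥ y) ^ 2 * (1 - δ) := by ring
          _ ≤ ((x ⬝ᵥ x) * (y ⬝ᵥ y)) * (1 - δ) := mul_le_mul_of_nonneg_right hcs h1δ.le
          _ = (x ⬝ᵥ x) * ((1 - δ) * (y ⬝ᵥ y)) := by ring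
          _ ≤ (x ⬝ᵥ x) * (x ⬝ᵥ y) := mul_le_mul_of_nonneg_left h6 hxx0
          _ = (x ⬝ᵥ y) * (x ⬝ᵥ x) := mul_comm _ _
      exact le_of_mul_le_mul_left h7 hq
  -- square root of G⁻¹ and the orthonormal frame V
  have hGinvpsd : (G⁻¹).PosSemidef := hGinvpos.posSemidef
  obtain ⟨S, hSS, hSt⟩ := psd_sqrt hGinvpsd
  have hScomm : S * G⁻¹ = G⁻¹ * S := by
    rw [← hSS, ← Matrix.mul_assoc]
  have hSG : G * S = S * G := by
    calc G * S = G * S * (G⁻¹ * G) := by rw [hGinvG, Matrix.mul_one]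
      _ = (G * (S * G⁻¹)) * G := by simp only [Matrix.mul_assoc]
      _ = (G * (G⁻¹ * S)) * G := by rw [hScomm]
      _ = (G * G⁻¹) * (S * G) := by simp only [Matrix.mul_assoc]
      _ = S * G := by rw [hGGinv, Matrix.one_mul]
  have hSGS : S * G * S = 1 := by
    calc S * G * S = S * (G * S) := Matrix.mul_assoc _ _ _
      _ = S * (S * G) := by rw [hSG]
      _ = (S * S) * G := (Matrix.mul_assoc _ _ _).symm
      _ = G⁻¹ * G := by rw [hSS]
      _ = 1 := hGinvG
  set V : Matrix (Fin n) (Fin k) ℝ := B * S with hV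
  have hVV : Vᵀ * V = 1 := by
    rw [hV, Matrix.transpose_mul, hSt, Matrix.mul_assoc, ← Matrix.mul_assoc Bᵀ B S, ← hG,
      ← Matrix.mul_assoc, hSGS]
  have hMherm : M.IsHermitian := by
    rw [Matrix.IsHermitian, Matrix.conjTranspose_eq_transpose_of_trivial, hM,
      Matrix.transpose_mul, Matrix.transpose_mul, Matrix.transpose_transpose, hAt,
      ← Matrix.mul_assoc]
  have hMpsd : M.PosSemidef := by
    have h := hA.mul_mul_conjTranspose_same C
    rwa [Matrix.conjTranspose_eq_transpose_of_trivial, ← hM] at h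
  have hKF : ∑ i : Fin k, μc (Fin.castLE hk i) ≤ Matrix.trace (Vᵀ * M * V) :=
    kyFan hk M hMherm μc hμc.1 hμc.2 V hVV
  set T : Matrix (Fin k) (Fin k) ℝ := Bᵀ * M * B with hT
  have hTpsd : T.PosSemidef := by
    have h := hMpsd.conjTranspose_mul_mul_same B
    rwa [Matrix.conjTranspose_eq_transpose_of_trivial] at h
  have htrV : Matrix.trace (Vᵀ * M * V) = Matrix.trace (T * G⁻¹) := by
    rw [hV, Matrix.transpose_mul, hSt]
    have e : S * Bᵀ * M * (B * S) = S * (T * S) := by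
      rw [hT]; simp only [Matrix.mul_assoc]
    rw [e, Matrix.trace_mul_comm S (T * S), Matrix.mul_assoc, hSS]
  have htrT : Matrix.trace (T * G⁻¹) ≤ (1 - δ)⁻¹ * Matrix.trace T :=
    trace_mul_le hTpsd _ hGinvquad
  -- rewrite T as Wᵀ A W with W = Uk - F
  set W : Matrix (Fin N) (Fin k) ℝ := Uk - F with hW
  have hCCUk : Cᵀ * C * Uk = W := by
    rw [hCCP, Matrix.sub_mul, Matrix.one_mul, hW, hF]
  have hTW : T = Wᵀ * A * W := by
    rw [hT, hM, hB, ← hCCUk]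
    simp only [Matrix.transpose_mul, Matrix.transpose_transpose, Matrix.mul_assoc]
  obtain ⟨Sa, hSaSa, hSat⟩ := psd_sqrt hA
  set Xm : Matrix (Fin N) (Fin k) ℝ := Sa * Uk with hXm
  set Ym : Matrix (Fin N) (Fin k) ℝ := Sa * F with hYm
  have hXY : Sa * W = Xm - Ym := by rw [hW, Matrix.mul_sub]
  have htrTW : Matrix.trace T = frobSq (Xm - Ym) := by
    rw [hTW, ← hXY, frobSq_eq_trace, Matrix.transpose_mul, hSat,
      Matrix.mul_assoc Wᵀ Sa (Sa * W), ← Matrix.mul_assoc Sa Sa W, hSaSa, ← Matrix.mul_assoc]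
  -- the selection identity
  have hJ : Uᵀ * Uk = (1 : Matrix (Fin N) (Fin N) ℝ).submatrix id c := by
    ext a i
    have h : (Uᵀ * U) a (c i) = (1 : Matrix (Fin N) (Fin N) ℝ) a (c i) := by rw [hUorth]
    simp only [Matrix.mul_apply, Matrix.transpose_apply] at h
    simp only [Matrix.mul_apply, Matrix.transpose_apply, Matrix.submatrix_apply, id_eq, hUk]
    exact h
  have hsel : ∀ D : Matrix (Fin N) (Fin N) ℝ,
      ((1 : Matrix (Fin N) (Fin N) ℝ).submatrix id c)ᵀ * D *
        ((1 : Matrix (Fin N) (Fin N) ℝ).submatrix id c) = D.submatrix c c := by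
    intro D
    ext i j
    simp [Matrix.mul_apply, Matrix.submatrix_apply, Matrix.one_apply, ite_mul, mul_ite,
      Finset.sum_ite_eq, Finset.sum_ite_eq']
  have hUkA : Ukᵀ * A * Uk = Matrix.diagonal (fun i => μ (c i)) := by
    have e : Ukᵀ * A * Uk = (Uᵀ * Uk)ᵀ * Matrix.diagonal μ * (Uᵀ * Uk) := by
      rw [hdecomp]
      simp only [Matrix.transpose_mul, Matrix.transpose_transpose, Matrix.mul_assoc]
    rw [e, hJ, hsel]
    ext i j
    by_cases hij : i = j
    · subst hij; simp
    · have hcc : c i ≠ c j := fun h => hij (Fin.castLE_injective (hk.trans hnN) h)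
      simp [Matrix.submatrix_apply, Matrix.diagonal_apply_ne, hij, hcc]
  have hfX : frobSq Xm = ∑ i : Fin k, μ (c i) := by
    rw [hXm, frobSq_eq_trace, Matrix.transpose_mul, hSat,
      Matrix.mul_assoc Ukᵀ Sa (Sa * Uk), ← Matrix.mul_assoc Sa Sa Uk, hSaSa,
      ← Matrix.mul_assoc, hUkA, Matrix.trace_diagonal]
  have hfY : frobSq Ym ≤ 2 * δ := by
    rw [hYm, frobSq_eq_trace, Matrix.transpose_mul, hSat,
      Matrix.mul_assoc Fᵀ Sa (Sa * F), ← Matrix.mul_assoc Sa Sa F, hSaSa, ← Matrix.mul_assoc]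
    calc Matrix.trace (Fᵀ * A * F) ≤ 2 * Matrix.trace (Fᵀ * F) := trace_conj_le A F 2 quadA
      _ = 2 * δ := by rw [← hδtr]
  have hfinal : Matrix.trace T ≤ (Real.sqrt (∑ i : Fin k, μ (c i)) + Real.sqrt (2 * δ)) ^ 2 := by
    rw [htrTW]
    refine (frobSq_sub_le Xm Ym).trans ?_
    have h2 : Real.sqrt (frobSq Ym) ≤ Real.sqrt (2 * δ) := Real.sqrt_le_sqrt hfY
    have h3 : (0:ℝ) ≤ Real.sqrt (frobSq Xm) + Real.sqrt (frobSq Ym) := by positivity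
    rw [hfX]
    exact pow_le_pow_left₀ (by rw [← hfX]; exact h3) (add_le_add le_rfl h2) 2
  calc ∑ i : Fin k, μc (Fin.castLE hk i) ≤ Matrix.trace (Vᵀ * M * V) := hKF
    _ = Matrix.trace (T * G⁻¹) := htrV
    _ ≤ (1 - δ)⁻¹ * Matrix.trace T := htrT
    _ ≤ (1 - δ)⁻¹ * (Real.sqrt (∑ i : Fin k, μ (c i)) + Real.sqrt (2 * δ)) ^ 2 :=
        mul_le_mul_of_nonneg_left hfinal (inv_nonneg.mpr h1δ.le)
    _ = (Real.sqrt (∑ i : Fin k, μ (c i)) + Real.sqrt (2 * δ)) ^ 2 / (1 - δ) :=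
        (div_eq_inv_mul _ _).symm
end
end
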